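/- arXiv:1311.2839 — 7 statements merged into one kernel-verified Lean document; each statement's English description precedes it below -/
import Mathlib

section
/- Let G be a connected undirected graph with n nodes, spectral gap α (i.e. 1 minus the second largest eigenvalue of the normalized adjacency matrix D^{-1/2} A D^{-1/2}), maximum degree Δ and minimum degree δ, and irregularity β = Δ/δ. Let Reg(G) be the Δ-regular graph obtained from G by adding Δ − deg(u) self-loops at each node u. Then the spectral gap of Reg(G) is at least α/β². -/
open Finset

/-- Average degree of a graph on `Fin n`. -/
noncomputable def avgDeg {n : ℕ} (G : SimpleGraph (Fin n)) [DecidableRel G.Adj] : ℝ :=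
  (∑ u, (G.degree u : ℝ)) / n

/-- Dirichlet form (local variance) of `f` for the random walk on `G`, with
respect to the stationary distribution `π_u = deg(u)/(n·d)`:
`E_{π,G}(f,f) = (1/2) ∑_{u,v} π_u (M_G)_{uv} (f u − f v)²`. -/
noncomputable def dirichletForm {n : ℕ} (G : SimpleGraph (Fin n)) [DecidableRel G.Adj]
    (f : Fin n → ℝ) : ℝ :=
  (1 / 2) * ∑ u, ∑ v, ((G.degree u : ℝ) / (n * avgDeg G)) *
    ((if G.Adj u v then (1 : ℝ) else 0) / (G.degree u)) * (f u - f v) ^ 2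

/-- Global variance of `f` with respect to `π_u = deg(u)/(n·d)`:
`Var_π(f) = (1/2) ∑_{u,v} π_u π_v (f u − f v)²`. -/
noncomputable def varForm {n : ℕ} (G : SimpleGraph (Fin n)) [DecidableRel G.Adj]
    (f : Fin n → ℝ) : ℝ :=
  (1 / 2) * ∑ u, ∑ v, ((G.degree u : ℝ) / (n * avgDeg G)) *
    ((G.degree v : ℝ) / (n * avgDeg G)) * (f u - f v) ^ 2

/-- Dirichlet form for the random walk on `Reg(G)`, the `Δ`-regular graph obtained
from `G` by adding `Δ − deg(u)` self-loops at `u`; self-loops contribute `0` since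
`f u − f u = 0`, and the stationary distribution is uniform. -/
noncomputable def dirichletFormReg {n : ℕ} (G : SimpleGraph (Fin n)) [DecidableRel G.Adj]
    (Δ : ℕ) (f : Fin n → ℝ) : ℝ :=
  (1 / 2) * ∑ u, ∑ v, ((1 : ℝ) / n) *
    ((if G.Adj u v then (1 : ℝ) else 0) / Δ) * (f u - f v) ^ 2

/-- Global variance of `f` with respect to the uniform distribution. -/
noncomputable def varFormUnif {n : ℕ} (f : Fin n → ℝ) : ℝ :=
  (1 / 2) * ∑ u, ∑ v, ((1 : ℝ) / n) * ((1 : ℝ) / n) * (f u - f v) ^ 2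

/-- If a connected graph `G` with maximum degree `Δ`, minimum degree `δ` and
irregularity `β = Δ/δ` has spectral gap at least `α` (in the variational sense),
then `Reg(G)` has spectral gap at least `α/β²`. -/
theorem regularization_spectralGap {n : ℕ} (G : SimpleGraph (Fin n)) [DecidableRel G.Adj]
    (hconn : G.Connected) (Δ δ : ℕ) (hδpos : 0 < δ)
    (hub : ∀ u, G.degree u ≤ Δ) (hlb : ∀ u, δ ≤ G.degree u)
    (hmax : ∃ u, G.degree u = Δ) (hmin : ∃ u, G.degree u = δ)
    (α β : ℝ) (hβ : β = (Δ : ℝ) / δ)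
    (hgap : ∀ f : Fin n → ℝ, (¬ ∃ c : ℝ, ∀ u, f u = c) →
      α * varForm G f ≤ dirichletForm G f) :
    ∀ f : Fin n → ℝ, (¬ ∃ c : ℝ, ∀ u, f u = c) →
      (α / β ^ 2) * varFormUnif f ≤ dirichletFormReg G Δ f := by

  intro f hf
  have hn : 0 < n := by
    rcases Nat.eq_zero_or_pos n with h | h
    · exfalso; apply hf; subst h; exact ⟨0, fun u => u.elim0⟩
    · exact h
  have hnR : (0:ℝ) < n := by exact_mod_cast hn
  set d := avgDeg G with hd
  have hΔpos : 0 < Δ := lt_of_lt_of_le hδpos ((hlb ⟨0, hn⟩).trans (hub ⟨0, hn⟩))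
  have hΔR : (0:ℝ) < Δ := by exact_mod_cast hΔpos
  have hδR : (0:ℝ) < δ := by exact_mod_cast hδpos
  have hdlb : (δ:ℝ) ≤ d := by
    rw [hd, avgDeg, le_div_iff₀ hnR]
    calc (δ:ℝ) * n = ∑ _u : Fin n, (δ:ℝ) := by
          rw [Finset.sum_const, card_univ, Fintype.card_fin, nsmul_eq_mul]; ring
      _ ≤ ∑ u, (G.degree u : ℝ) :=
          Finset.sum_le_sum fun u _ => Nat.cast_le.mpr (hlb u)
  have hdub : d ≤ (Δ:ℝ) := by
    rw [hd, avgDeg, div_le_iff₀ hnR]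
    calc ∑ u, (G.degree u : ℝ) ≤ ∑ _u : Fin n, (Δ:ℝ) :=
          Finset.sum_le_sum fun u _ => Nat.cast_le.mpr (hub u)
      _ = (Δ:ℝ) * n := by
          rw [Finset.sum_const, card_univ, Fintype.card_fin, nsmul_eq_mul]; ring
  have hdpos : 0 < d := lt_of_lt_of_le hδR hdlb
  have hdeg : ∀ u : Fin n, (0:ℝ) < G.degree u := fun u =>
    lt_of_lt_of_le hδR (Nat.cast_le.mpr (hlb u))
  have hDR : dirichletFormReg G Δ f = (d / Δ) * dirichletForm G f := by
    unfold dirichletFormReg dirichletForm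
    have key : ∀ u v : Fin n, ((1:ℝ)/n) * ((if G.Adj u v then (1:ℝ) else 0)/Δ) * (f u - f v)^2
        = (d/Δ) * (((G.degree u : ℝ)/(n*d)) * ((if G.Adj u v then (1:ℝ) else 0)/(G.degree u)) * (f u - f v)^2) := by
      intro u v
      have h1 : (G.degree u : ℝ) ≠ 0 := ne_of_gt (hdeg u)
      by_cases h : G.Adj u v
      · simp only [h, if_true]
        field_simp
      · simp [h]
    simp_rw [key, ← Finset.mul_sum]
    ring
  have hV : varFormUnif f ≤ (d/δ)^2 * varForm G f := by
    unfold varFormUnif varForm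
    have key : ∀ u v : Fin n, ((1:ℝ)/n) * ((1:ℝ)/n) * (f u - f v)^2
        ≤ (d/δ)^2 * (((G.degree u : ℝ)/(n*d)) * ((G.degree v : ℝ)/(n*d)) * (f u - f v)^2) := by
      intro u v
      have h1 : (δ:ℝ) ≤ G.degree u := Nat.cast_le.mpr (hlb u)
      have h2 : (δ:ℝ) ≤ G.degree v := Nat.cast_le.mpr (hlb v)
      have hcoef : ((1:ℝ)/n) * ((1:ℝ)/n)
          ≤ (d/δ)^2 * (((G.degree u : ℝ)/(n*d)) * ((G.degree v : ℝ)/(n*d))) := by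
        have heq : (d/δ)^2 * (((G.degree u : ℝ)/(n*d)) * ((G.degree v : ℝ)/(n*d)))
            = ((G.degree u : ℝ) * G.degree v) / ((n*δ)^2) := by
          field_simp
        rw [heq]
        rw [div_mul_div_comm, one_mul, div_le_div_iff₀ (by positivity) (by positivity)]
        nlinarith [mul_le_mul_of_nonneg_left (mul_le_mul h1 h2 hδR.le (hdeg u).le)
          (mul_pos hnR hnR).le]
      calc ((1:ℝ)/n) * ((1:ℝ)/n) * (f u - f v)^2
          ≤ ((d/δ)^2 * (((G.degree u : ℝ)/(n*d)) * ((G.degree v : ℝ)/(n*d)))) * (f u - f v)^2 :=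
            mul_le_mul_of_nonneg_right hcoef (sq_nonneg _)
        _ = (d/δ)^2 * (((G.degree u : ℝ)/(n*d)) * ((G.degree v : ℝ)/(n*d)) * (f u - f v)^2) := by ring
    calc (1/2) * ∑ u, ∑ v, ((1:ℝ)/n) * ((1:ℝ)/n) * (f u - f v)^2
        ≤ (1/2) * ∑ u, ∑ v, (d/δ)^2 * (((G.degree u : ℝ)/(n*d)) * ((G.degree v : ℝ)/(n*d)) * (f u - f v)^2) := by
          apply mul_le_mul_of_nonneg_left _ (by norm_num)
          exact Finset.sum_le_sum fun u _ => Finset.sum_le_sum fun v _ => key u v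
      _ = (d/δ)^2 * ((1/2) * ∑ u, ∑ v, ((G.degree u : ℝ)/(n*d)) * ((G.degree v : ℝ)/(n*d)) * (f u - f v)^2) := by
          simp_rw [← Finset.mul_sum]; ring
  have hVar_nonneg : 0 ≤ varForm G f := by
    unfold varForm
    apply mul_nonneg (by norm_num)
    apply Finset.sum_nonneg; intro u _
    apply Finset.sum_nonneg; intro v _
    have := hdeg u; have := hdeg v
    positivity
  have hDR_nonneg : 0 ≤ dirichletFormReg G Δ f := by
    unfold dirichletFormReg
    apply mul_nonneg (by norm_num)
    apply Finset.sum_nonneg; intro u _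
    apply Finset.sum_nonneg; intro v _
    apply mul_nonneg _ (sq_nonneg _)
    apply mul_nonneg (by positivity)
    apply div_nonneg _ (le_of_lt hΔR)
    split <;> norm_num
  have hVU_nonneg : 0 ≤ varFormUnif f := by
    unfold varFormUnif
    apply mul_nonneg (by norm_num)
    apply Finset.sum_nonneg; intro u _
    apply Finset.sum_nonneg; intro v _
    positivity
  have hβpos : 0 < β := by rw [hβ]; positivity
  rcases le_or_gt α 0 with hα | hα
  · have h1 : (α / β^2) * varFormUnif f ≤ 0 :=
      mul_nonpos_of_nonpos_of_nonneg (div_nonpos_of_nonpos_of_nonneg hα (sq_nonneg β)) hVU_nonneg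
    exact h1.trans hDR_nonneg
  · calc (α / β^2) * varFormUnif f
        ≤ (α / β^2) * ((d/δ)^2 * varForm G f) :=
          mul_le_mul_of_nonneg_left hV (by positivity)
      _ = α * (d^2/Δ^2) * varForm G f := by
          rw [hβ]; field_simp
      _ ≤ α * (d/Δ) * varForm G f := by
          apply mul_le_mul_of_nonneg_right _ hVar_nonneg
          apply mul_le_mul_of_nonneg_left _ (le_of_lt hα)
          rw [div_le_div_iff₀ (by positivity) hΔR]
          nlinarith [mul_le_mul_of_nonneg_left hdub (mul_pos hdpos hΔR).le]
      _ = (d/Δ) * (α * varForm G f) := by ring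
      _ ≤ (d/Δ) * dirichletForm G f :=
          mul_le_mul_of_nonneg_left (hgap f hf) (by positivity)
      _ = dirichletFormReg G Δ f := hDR.symm
end

section
/- Let M ∈ ℝ^{n×n} be a doubly-stochastic symmetric matrix whose eigenvalues are all at most 1−α for eigenvectors orthogonal to the all-ones vector, where α > 0. Let π be the uniform distribution on [n]. Let E = L_{γ,γ}∘Q(M) − L_γ(M)⊗L_γ(M), where L_γ(M) = (1−γ)I + γM and L_{γ,γ}∘Q(M) = (1−γ)²(I⊗I) + (1−γ)γ(I⊗M) + γ(1−γ)(M⊗I) + γ²Q(M). If M_{uv} ≤ η for all u ≠ v, then ‖(π⊗π)E‖₂ ≤ √2 · γ² · n^{−3/2}. -/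
open Matrix Finset

/-- The Doeblin coupling of a stochastic matrix with itself. -/
noncomputable def doeblin {n : ℕ} (M : Matrix (Fin n) (Fin n) ℝ) :
    Matrix (Fin n × Fin n) (Fin n × Fin n) ℝ :=
  fun p q =>
    if p.1 = p.2 then (if q.1 = q.2 then M p.1 q.1 else 0)
    else M p.1 q.1 * M p.2 q.2

/-- Kronecker (tensor) product of two `n × n` matrices, indexed by pairs. -/
def tensor {n : ℕ} (A B : Matrix (Fin n) (Fin n) ℝ) :
    Matrix (Fin n × Fin n) (Fin n × Fin n) ℝ :=
  fun p q => A p.1 q.1 * B p.2 q.2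

/-- The lazy Markov chain `L_γ(M) = (1−γ)I + γM`. -/
noncomputable def lazyM {n : ℕ} (γ : ℝ) (M : Matrix (Fin n) (Fin n) ℝ) :
    Matrix (Fin n) (Fin n) ℝ :=
  (1 - γ) • (1 : Matrix (Fin n) (Fin n) ℝ) + γ • M

/-- The bi-lazy Doeblin coupling
`L_{γ,γ}∘Q(M) = (1−γ)²(I⊗I) + (1−γ)γ(I⊗M) + γ(1−γ)(M⊗I) + γ²Q(M)`. -/
noncomputable def lazyQ {n : ℕ} (γ : ℝ) (M : Matrix (Fin n) (Fin n) ℝ) :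
    Matrix (Fin n × Fin n) (Fin n × Fin n) ℝ :=
  (1 - γ) ^ 2 • tensor (1 : Matrix (Fin n) (Fin n) ℝ) 1 +
    ((1 - γ) * γ) • tensor 1 M + (γ * (1 - γ)) • tensor M 1 + γ ^ 2 • doeblin M

/-- Euclidean norm of a finitely indexed real vector. -/
noncomputable def eucNorm {α : Type*} [Fintype α] (v : α → ℝ) : ℝ :=
  Real.sqrt (∑ i, (v i) ^ 2)

/-- For a doubly-stochastic symmetric `M` with spectral gap `α` and off-diagonal
entries at most `η`, the row vector `(π⊗π)·E`, where
`E = L_{γ,γ}∘Q(M) − L_γ(M)⊗L_γ(M)`, has Euclidean norm at most `√2·γ²·n^{−3/2}`. -/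
theorem pipi_error_bound {n : ℕ} (M : Matrix (Fin n) (Fin n) ℝ) (α η γ : ℝ)
    (hsym : M.IsSymm) (hnn : ∀ i j, 0 ≤ M i j)
    (hrow : ∀ i, ∑ j, M i j = 1) (hcol : ∀ j, ∑ i, M i j = 1)
    (hα : 0 < α)
    (heig : ∀ (c : ℝ) (v : Fin n → ℝ), v ≠ 0 → (∑ i, v i) = 0 →
      M *ᵥ v = c • v → c ≤ 1 - α)
    (hη : ∀ u v, u ≠ v → M u v ≤ η) :
    eucNorm ((fun _ : Fin n × Fin n => 1 / (n : ℝ) ^ 2) ᵥ*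
        (lazyQ γ M - tensor (lazyM γ M) (lazyM γ M)))
      ≤ Real.sqrt 2 * γ ^ 2 / Real.sqrt ((n : ℝ) ^ 3) := by

  classical
  set S : Fin n → Fin n → ℝ := fun v x => ∑ u, M u v * M u x with hSdef
  -- entry formula
  have hentry : ∀ q : Fin n × Fin n,
      ((fun _ : Fin n × Fin n => 1 / (n : ℝ) ^ 2) ᵥ*
        (lazyQ γ M - tensor (lazyM γ M) (lazyM γ M))) q
        = γ ^ 2 / (n : ℝ) ^ 2 * ((if q.1 = q.2 then (1:ℝ) else 0) - S q.1 q.2) := by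
    rintro ⟨v, x⟩
    have hE : ∀ p : Fin n × Fin n,
        (lazyQ γ M - tensor (lazyM γ M) (lazyM γ M)) p (v, x)
          = γ ^ 2 * (doeblin M p (v, x) - M p.1 v * M p.2 x) := by
      intro p
      simp only [lazyQ, lazyM, tensor, Matrix.sub_apply, Matrix.add_apply,
        Matrix.smul_apply, smul_eq_mul]
      ring
    simp only [Matrix.vecMul, dotProduct]
    rw [Fintype.sum_prod_type]
    have hinner : ∀ u : Fin n,
        (∑ w : Fin n, (1 / (n : ℝ) ^ 2) *
            (lazyQ γ M - tensor (lazyM γ M) (lazyM γ M)) (u, w) (v, x))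
          = (1 / (n : ℝ) ^ 2) * (γ ^ 2 *
              ((if v = x then M u v else 0) - M u v * M u x)) := by
      intro u
      rw [Finset.sum_eq_single u]
      · rw [hE (u, u)]; simp [doeblin]
      · intro w _ hw
        rw [hE (u, w)]
        simp only [doeblin]
        rw [if_neg (by simpa using (Ne.symm hw))]
        ring
      · intro h; exact absurd (Finset.mem_univ u) h
    rw [Finset.sum_congr rfl (fun u _ => hinner u)]
    have hsum1 : (∑ u : Fin n, (if v = x then M u v else 0)) = (if v = x then (1:ℝ) else 0) := by
      by_cases h : v = x <;> simp [h, hcol]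
    calc (∑ u : Fin n, (1 / (n : ℝ) ^ 2) * (γ ^ 2 *
              ((if v = x then M u v else 0) - M u v * M u x)))
        = γ ^ 2 / (n : ℝ) ^ 2 *
            ((∑ u : Fin n, (if v = x then M u v else 0)) - ∑ u : Fin n, M u v * M u x) := by
          rw [← Finset.sum_sub_distrib, Finset.mul_sum]
          apply Finset.sum_congr rfl
          intro u _; ring
      _ = γ ^ 2 / (n : ℝ) ^ 2 * ((if v = x then (1:ℝ) else 0) - S v x) := by
          rw [hsum1]
  rcases Nat.eq_zero_or_pos n with hn | hn
  · subst hn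
    simp [eucNorm, Finset.univ_eq_empty]
  have hn0 : (0:ℝ) < (n:ℝ) := by exact_mod_cast hn
  -- properties of S
  have hSnn : ∀ v x, 0 ≤ S v x := fun v x =>
    Finset.sum_nonneg fun u _ => mul_nonneg (hnn u v) (hnn u x)
  have hSrow : ∀ v, ∑ x, S v x = 1 := by
    intro v
    simp only [hSdef]
    rw [Finset.sum_comm]
    have : ∀ u : Fin n, ∑ x, M u v * M u x = M u v := by
      intro u; rw [← Finset.mul_sum, hrow, mul_one]
    rw [Finset.sum_congr rfl (fun u _ => this u)]
    exact hcol v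
  -- per-row bound
  have hrowbd : ∀ v : Fin n, ∑ x, ((if v = x then (1:ℝ) else 0) - S v x) ^ 2 ≤ 2 := by
    intro v
    have hsplit := Finset.add_sum_erase Finset.univ
      (fun x => ((if v = x then (1:ℝ) else 0) - S v x) ^ 2) (Finset.mem_univ v)
    rw [← hsplit]
    beta_reduce
    have hvv : ((if v = v then (1:ℝ) else 0) - S v v) ^ 2 = (1 - S v v) ^ 2 := by simp
    have herase : ∀ x ∈ Finset.univ.erase v,
        ((if v = x then (1:ℝ) else 0) - S v x) ^ 2 = (S v x) ^ 2 := by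
      intro x hx
      rw [if_neg (Ne.symm (Finset.ne_of_mem_erase hx))]
      ring
    rw [hvv, Finset.sum_congr rfl herase]
    have hT : ∑ x ∈ Finset.univ.erase v, S v x = 1 - S v v := by
      have := Finset.add_sum_erase Finset.univ (fun x => S v x) (Finset.mem_univ v)
      rw [hSrow v] at this
      linarith
    have hsq : ∑ x ∈ Finset.univ.erase v, (S v x) ^ 2
        ≤ (∑ x ∈ Finset.univ.erase v, S v x) * (∑ x ∈ Finset.univ.erase v, S v x) := by
      rw [Finset.sum_mul]
      apply Finset.sum_le_sum
      intro x hx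
      have h1 : S v x ≤ ∑ y ∈ Finset.univ.erase v, S v y :=
        Finset.single_le_sum (fun y _ => hSnn v y) hx
      nlinarith [hSnn v x]
    have hSvv1 : S v v ≤ 1 := by
      rw [← hSrow v]
      exact Finset.single_le_sum (fun y _ => hSnn v y) (Finset.mem_univ v)
    have hSvv0 : 0 ≤ S v v := hSnn v v
    nlinarith [hT, hsq]
  -- total bound
  have htot : ∑ q : Fin n × Fin n,
      (((fun _ : Fin n × Fin n => 1 / (n : ℝ) ^ 2) ᵥ*
        (lazyQ γ M - tensor (lazyM γ M) (lazyM γ M))) q) ^ 2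
      ≤ (γ ^ 2 / (n : ℝ) ^ 2) ^ 2 * (2 * n) := by
    calc ∑ q : Fin n × Fin n, (((fun _ : Fin n × Fin n => 1 / (n : ℝ) ^ 2) ᵥ*
          (lazyQ γ M - tensor (lazyM γ M) (lazyM γ M))) q) ^ 2
        = ∑ q : Fin n × Fin n, (γ ^ 2 / (n : ℝ) ^ 2) ^ 2 *
            ((if q.1 = q.2 then (1:ℝ) else 0) - S q.1 q.2) ^ 2 := by
          apply Finset.sum_congr rfl
          intro q _
          rw [hentry q]; ring
      _ = (γ ^ 2 / (n : ℝ) ^ 2) ^ 2 * ∑ v : Fin n, ∑ x : Fin n,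
            ((if v = x then (1:ℝ) else 0) - S v x) ^ 2 := by
          rw [← Finset.mul_sum, Fintype.sum_prod_type]
      _ ≤ (γ ^ 2 / (n : ℝ) ^ 2) ^ 2 * (2 * n) := by
          apply mul_le_mul_of_nonneg_left _ (by positivity)
          calc ∑ v : Fin n, ∑ x : Fin n, ((if v = x then (1:ℝ) else 0) - S v x) ^ 2
              ≤ ∑ _v : Fin n, (2:ℝ) := Finset.sum_le_sum (fun v _ => hrowbd v)
            _ = 2 * n := by simp [mul_comm]
  -- conclude
  have hrhs : Real.sqrt ((γ ^ 2 / (n : ℝ) ^ 2) ^ 2 * (2 * n))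
      = Real.sqrt 2 * γ ^ 2 / Real.sqrt ((n : ℝ) ^ 3) := by
    rw [eq_div_iff (by positivity : Real.sqrt ((n : ℝ) ^ 3) ≠ 0),
      ← Real.sqrt_sq (by positivity : (0:ℝ) ≤ γ ^ 2),
      ← Real.sqrt_mul (by norm_num : (0:ℝ) ≤ 2),
      ← Real.sqrt_mul (by positivity)]
    congr 1
    field_simp
    ring
    exact Real.sq_sqrt (by positivity)
  rw [eucNorm, ← hrhs]
  exact Real.sqrt_le_sqrt htot
end

section
/- Let G = (G₀,…,G_{d−1}) be a pairwise independent generator with each G_i : {0,1}^ℓ → [m]. Define G'_i(x) = G_i(x) mod m_i for integers 1 ≤ m_i ≤ m. Then G' is ε-pairwise independent with ε = 2/m: for each i and x ∈ [m_i], |Pr_s[G'_i(s)=x] − 1/m_i| ≤ 2/m, and for distinct i,j and x ∈ [m_i], x' ∈ [m_j], |Pr_s[G'_i(s)=x ∧ G'_j(s)=x'] − 1/(m_i·m_j)| ≤ 2/m. -/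
open Finset

-- counting lemma in ℕ
lemma count_mod_bounds (m c x : ℕ) (hc : 0 < c) (hx : x < c) :
    m / c ≤ ((Finset.range m).filter (fun y => y % c = x)).card ∧
    ((Finset.range m).filter (fun y => y % c = x)).card ≤ m / c + 1 := by
  constructor
  · have hsub : ((Finset.range (m / c)).image (fun j => j * c + x)) ⊆
        (Finset.range m).filter (fun y => y % c = x) := by
      intro y hy
      simp only [Finset.mem_image, Finset.mem_range] at hy
      obtain ⟨j, hj, rfl⟩ := hy
      simp only [Finset.mem_filter, Finset.mem_range]
      refine ⟨?_, ?_⟩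
      · calc j * c + x < j * c + c := by omega
          _ = (j+1) * c := by ring
          _ ≤ (m/c) * c := Nat.mul_le_mul_right c hj
          _ ≤ m := Nat.div_mul_le_self m c
      · rw [add_comm, Nat.add_mul_mod_self_right, Nat.mod_eq_of_lt hx]
    have hinj : Function.Injective (fun j => j * c + x) := by
      intro a b hab
      simp only at hab
      have : a * c = b * c := by omega
      exact Nat.eq_of_mul_eq_mul_right hc this
    calc m / c = ((Finset.range (m / c)).image (fun j => j * c + x)).card := by
          rw [Finset.card_image_of_injective _ hinj, Finset.card_range]
      _ ≤ _ := Finset.card_le_card hsub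
  · have := Finset.card_le_card_of_injOn
      (f := fun y => y / c) (s := (Finset.range m).filter (fun y => y % c = x))
      (t := Finset.range (m / c + 1)) ?_ ?_
    · rw [Finset.card_range] at this; exact this
    · intro y hy
      simp only [Finset.mem_coe, Finset.mem_filter, Finset.mem_range] at hy ⊢
      have : y / c ≤ m / c := Nat.div_le_div_right (le_of_lt hy.1)
      omega
    · intro a ha b hb hab
      simp only [Finset.mem_coe, Finset.mem_filter, Finset.mem_range] at ha hb
      obtain ⟨ha1, ha2⟩ := ha
      obtain ⟨hb1, hb2⟩ := hb
      have h1 := Nat.div_add_mod a c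
      have h2 := Nat.div_add_mod b c
      beta_reduce at hab
      have h3 : c * (a/c) = c * (b/c) := by rw [hab]
      omega

lemma close_real (m c : ℕ) (hm : 0 < m) (hc : 0 < c) (K : ℕ)
    (h1 : m / c ≤ K) (h2 : K ≤ m / c + 1) :
    |(K : ℝ) / m - 1 / c| ≤ 1 / m := by
  have hmc1 : (m / c) * c ≤ m := Nat.div_mul_le_self m c
  have hmc2 : m < (m / c + 1) * c := by
    rw [Nat.add_one_mul]
    have h := Nat.div_add_mod m c
    have h2 := Nat.mod_lt m hc
    have h3 : (m/c)*c = c*(m/c) := Nat.mul_comm _ _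
    omega
  have hKc : (K : ℝ) * c ≤ m + c := by
    have : K * c ≤ m + c := by nlinarith [Nat.mul_le_mul_right c h2]
    exact_mod_cast this
  have hKc' : (m : ℝ) ≤ K * c + c := by
    have : m ≤ K * c + c := by nlinarith [Nat.mul_le_mul_right c h1]
    exact_mod_cast this
  have hm' : (0:ℝ) < m := by exact_mod_cast hm
  have hc' : (0:ℝ) < c := by exact_mod_cast hc
  have e1 : (K : ℝ) / m - 1 / c = ((K:ℝ) * c - m) / (m * c) := by
    field_simp
  have hpos : (0:ℝ) < m * c := by positivity
  rw [e1, abs_div, abs_of_pos hpos, div_le_div_iff₀ hpos hm']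
  have habs : |(K:ℝ) * c - m| ≤ c := abs_le.mpr ⟨by linarith, by linarith⟩
  nlinarith

lemma fin_filter_card (m c x : ℕ) :
    ((Finset.univ : Finset (Fin m)).filter (fun y => y.val % c = x)).card
      = ((Finset.range m).filter (fun y => y % c = x)).card := by
  apply Finset.card_bij (fun y _ => y.val)
  · intro y hy
    simp only [Finset.mem_filter, Finset.mem_univ, true_and] at hy
    simp [Finset.mem_filter, Finset.mem_range, y.isLt, hy]
  · intro a _ b _ hab
    exact Fin.val_injective hab
  · intro z hz
    simp only [Finset.mem_filter, Finset.mem_range] at hz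
    exact ⟨⟨z, hz.1⟩, by simp [hz.2], rfl⟩

lemma prob_single {ℓ m : ℕ} (hm : 0 < m) (g : (Fin ℓ → Bool) → Fin m)
    (hU : ∀ x : Fin m,
      ((Finset.univ.filter (fun s : Fin ℓ → Bool => g s = x)).card : ℝ) / 2 ^ ℓ = 1 / m)
    (c x : ℕ) :
    ((Finset.univ.filter (fun s : Fin ℓ → Bool => (g s).val % c = x)).card : ℝ) / 2 ^ ℓ
      = (((Finset.univ : Finset (Fin m)).filter (fun y => y.val % c = x)).card : ℝ) / m := by
  have hdec := Finset.card_eq_sum_card_fiberwise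
    (s := Finset.univ.filter (fun s : Fin ℓ → Bool => (g s).val % c = x))
    (t := (Finset.univ : Finset (Fin m)).filter (fun y => y.val % c = x))
    (f := g) (by intro s hs; simp only [Finset.mem_coe, Finset.mem_filter, Finset.mem_univ, true_and] at hs ⊢; exact hs)
  have hfib : ∀ y ∈ (Finset.univ : Finset (Fin m)).filter (fun y => y.val % c = x),
      ((Finset.univ.filter (fun s : Fin ℓ → Bool => (g s).val % c = x)).filter
        (fun s => g s = y)).card
      = (Finset.univ.filter (fun s : Fin ℓ → Bool => g s = y)).card := by
    intro y hy
    simp only [Finset.mem_filter, Finset.mem_univ, true_and] at hy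
    congr 1
    rw [Finset.filter_filter]
    apply Finset.filter_congr
    intro s _
    constructor
    · exact fun h => h.2
    · exact fun h => ⟨by rw [h]; exact hy, h⟩
  rw [Finset.sum_congr rfl hfib] at hdec
  rw [hdec]
  push_cast
  rw [Finset.sum_div, Finset.sum_congr rfl (fun y _ => hU y), Finset.sum_const]
  simp [div_eq_mul_inv]

lemma prob_pair {ℓ m : ℕ} (hm : 0 < m) (g g' : (Fin ℓ → Bool) → Fin m)
    (hP : ∀ x x' : Fin m,
      ((Finset.univ.filter (fun s : Fin ℓ → Bool => g s = x ∧ g' s = x')).card : ℝ) / 2 ^ ℓ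
        = 1 / (m * m))
    (c c' x x' : ℕ) :
    ((Finset.univ.filter (fun s : Fin ℓ → Bool =>
        (g s).val % c = x ∧ (g' s).val % c' = x')).card : ℝ) / 2 ^ ℓ
      = (((Finset.univ : Finset (Fin m)).filter (fun y => y.val % c = x)).card : ℝ)
        * (((Finset.univ : Finset (Fin m)).filter (fun y => y.val % c' = x')).card : ℝ)
        / (m * m) := by
  have hdec := Finset.card_eq_sum_card_fiberwise
    (s := Finset.univ.filter (fun s : Fin ℓ → Bool =>
        (g s).val % c = x ∧ (g' s).val % c' = x'))
    (t := ((Finset.univ : Finset (Fin m)).filter (fun y => y.val % c = x)) ×ˢ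
          ((Finset.univ : Finset (Fin m)).filter (fun y => y.val % c' = x')))
    (f := fun s => (g s, g' s))
    (by intro s hs
        simp only [Finset.mem_coe, Finset.mem_filter, Finset.mem_univ, true_and, Finset.mem_product] at hs ⊢
        exact hs)
  have hfib : ∀ p ∈ ((Finset.univ : Finset (Fin m)).filter (fun y => y.val % c = x)) ×ˢ
          ((Finset.univ : Finset (Fin m)).filter (fun y => y.val % c' = x')),
      ((Finset.univ.filter (fun s : Fin ℓ → Bool =>
          (g s).val % c = x ∧ (g' s).val % c' = x')).filter
        (fun s => (g s, g' s) = p)).card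
      = (Finset.univ.filter (fun s : Fin ℓ → Bool => g s = p.1 ∧ g' s = p.2)).card := by
    intro p hp
    simp only [Finset.mem_product, Finset.mem_filter, Finset.mem_univ, true_and] at hp
    congr 1
    rw [Finset.filter_filter]
    apply Finset.filter_congr
    intro s _
    simp only [Prod.ext_iff]
    constructor
    · exact fun h => h.2
    · rintro ⟨h1, h2⟩
      exact ⟨⟨by rw [h1]; exact hp.1, by rw [h2]; exact hp.2⟩, h1, h2⟩
  rw [Finset.sum_congr rfl hfib] at hdec
  rw [hdec]
  push_cast
  rw [Finset.sum_div, Finset.sum_congr rfl (fun p _ => hP p.1 p.2), Finset.sum_const]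
  rw [Finset.card_product]
  push_cast
  ring

lemma product_close (a b α β C : ℝ) (ha0 : 0 ≤ a) (ha1 : a ≤ 1)
    (hb0 : 0 ≤ β) (hb1 : β ≤ 1) (h1 : |a - α| ≤ C) (h2 : |b - β| ≤ C) :
    |a * b - α * β| ≤ 2 * C := by
  have hC : 0 ≤ C := le_trans (abs_nonneg _) h1
  have e : a * b - α * β = a * (b - β) + β * (a - α) := by ring
  rw [e]
  calc |a * (b - β) + β * (a - α)| ≤ |a * (b - β)| + |β * (a - α)| := abs_add_le _ _
    _ = a * |b - β| + β * |a - α| := by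
        rw [abs_mul, abs_mul, abs_of_nonneg ha0, abs_of_nonneg hb0]
    _ ≤ 1 * C + 1 * C := by
        apply add_le_add
        · exact mul_le_mul ha1 h2 (abs_nonneg _) zero_le_one
        · exact mul_le_mul hb1 h1 (abs_nonneg _) zero_le_one
    _ = 2 * C := by ring


/-- Reducing a pairwise independent generator modulo `m_i ≤ m` yields an
`ε`-pairwise independent generator with `ε = 2/m`. Seeds are uniform over
`{0,1}^ℓ`; probabilities are computed by counting seeds. -/
theorem pairwise_mod_almost_pairwise {ℓ d m : ℕ} (hm : 0 < m)
    (G : Fin d → (Fin ℓ → Bool) → Fin m)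
    (mi : Fin d → ℕ) (hmi : ∀ i, 1 ≤ mi i) (hmi' : ∀ i, mi i ≤ m)
    (hUnif : ∀ (i : Fin d) (x : Fin m),
      ((Finset.univ.filter (fun s : Fin ℓ → Bool => G i s = x)).card : ℝ) / 2 ^ ℓ
        = 1 / m)
    (hPair : ∀ (i j : Fin d), i ≠ j → ∀ (x x' : Fin m),
      ((Finset.univ.filter
          (fun s : Fin ℓ → Bool => G i s = x ∧ G j s = x')).card : ℝ) / 2 ^ ℓ
        = 1 / (m * m)) :
    (∀ (i : Fin d) (x : ℕ), x < mi i →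
      |((Finset.univ.filter
            (fun s : Fin ℓ → Bool => (G i s).val % mi i = x)).card : ℝ) / 2 ^ ℓ
          - 1 / (mi i)| ≤ 2 / m) ∧
    (∀ (i j : Fin d), i ≠ j → ∀ (x x' : ℕ), x < mi i → x' < mi j →
      |((Finset.univ.filter (fun s : Fin ℓ → Bool =>
            (G i s).val % mi i = x ∧ (G j s).val % mi j = x')).card : ℝ) / 2 ^ ℓ
          - 1 / (mi i * mi j)| ≤ 2 / m) := by
  have hm' : (0:ℝ) < m := by exact_mod_cast hm
  -- per-index facts
  have hKfacts : ∀ (i : Fin d) (x : ℕ), x < mi i →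
      (((Finset.univ : Finset (Fin m)).filter (fun y => y.val % mi i = x)).card : ℝ) / m ≤ 1 ∧
      0 ≤ (((Finset.univ : Finset (Fin m)).filter (fun y => y.val % mi i = x)).card : ℝ) / m ∧
      |(((Finset.univ : Finset (Fin m)).filter (fun y => y.val % mi i = x)).card : ℝ) / m
        - 1 / (mi i)| ≤ 1 / m := by
    intro i x hx
    have hc : 0 < mi i := hmi i
    have hK := count_mod_bounds m (mi i) x hc hx
    rw [fin_filter_card]
    have hKle : ((Finset.range m).filter (fun y => y % mi i = x)).card ≤ m := by
      calc _ ≤ (Finset.range m).card := Finset.card_filter_le _ _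
        _ = m := Finset.card_range m
    refine ⟨?_, ?_, ?_⟩
    · rw [div_le_one hm']; exact_mod_cast hKle
    · positivity
    · exact close_real m (mi i) hm hc _ hK.1 hK.2
  constructor
  · intro i x hx
    rw [prob_single hm (G i) (hUnif i) (mi i) x]
    have h := (hKfacts i x hx).2.2
    calc _ ≤ 1 / (m:ℝ) := h
      _ ≤ 2 / m := by apply div_le_div_of_nonneg_right <;> norm_num
      
  · intro i j hij x x' hx hx'
    rw [prob_pair hm (G i) (G j) (hPair i j hij) (mi i) (mi j) x x']
    obtain ⟨hA1, hA0, hAc⟩ := hKfacts i x hx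
    obtain ⟨hB1, hB0, hBc⟩ := hKfacts j x' hx'
    have hcj : 0 < mi j := hmi j
    have hcj' : (0:ℝ) < mi j := by exact_mod_cast hcj
    have e1 : (((Finset.univ : Finset (Fin m)).filter (fun y => y.val % mi i = x)).card : ℝ)
        * (((Finset.univ : Finset (Fin m)).filter (fun y => y.val % mi j = x')).card : ℝ)
        / (m * m)
      = ((((Finset.univ : Finset (Fin m)).filter (fun y => y.val % mi i = x)).card : ℝ) / m)
        * ((((Finset.univ : Finset (Fin m)).filter (fun y => y.val % mi j = x')).card : ℝ) / m) := by
      field_simp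
    have e2 : (1:ℝ) / (mi i * mi j) = (1 / mi i) * (1 / mi j) := by
      push_cast
      rw [div_mul_div_comm, one_mul]
    rw [e1, e2]
    have hb0 : (0:ℝ) ≤ 1 / mi j := by positivity
    have hb1 : (1:ℝ) / mi j ≤ 1 := by
      rw [div_le_one hcj']
      exact_mod_cast hmi j
    have := product_close _ _ _ _ (1/m) hA0 hA1 hb0 hb1 hAc hBc
    calc _ ≤ 2 * (1 / (m:ℝ)) := this
      _ = 2 / m := by ring
end

section
/- Let Γ : [N] × [D] → ⨆_{y∈[D]}[M_y] be a (K, (1−ε)D)-expander, i.e., for every set S ⊆ [N] of size K, the neighborhood N(S) = {(Γ(x,y), y) : x ∈ S, y ∈ [D]} has size at least (1−ε)DK. Then for every S ⊆ [N] with |S| = K, for at least a (1 − √ε)-fraction of y ∈ [D], the set {Γ(x,y) : x ∈ S} has size at least (1 − √ε)K. -/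
open Finset
open scoped Classical

/-- For a `(K, (1−ε)D)`-expander `Γ : [N]×[D] → ⨆_y [M_y]` and a left set `S`
of size `K`, for at least a `(1−√ε)`-fraction of the seeds `y ∈ [D]`, the map
`Γ(·,y)` is almost injective on `S`: `|{Γ(x,y) : x ∈ S}| ≥ (1−√ε)K`. -/
theorem expander_almost_injective {N D K : ℕ} (M : Fin D → ℕ)
    (Γ : Fin N → (y : Fin D) → Fin (M y)) (ε : ℝ) (hε0 : 0 ≤ ε) (hε1 : ε ≤ 1)
    (hexp : ∀ S : Finset (Fin N), S.card = K →
      ((1 - ε) * D * K : ℝ) ≤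
        (((S ×ˢ (Finset.univ : Finset (Fin D))).image
            (fun p => (⟨p.2, Γ p.1 p.2⟩ : Σ y : Fin D, Fin (M y)))).card : ℝ)) :
    ∀ S : Finset (Fin N), S.card = K →
      ((1 - Real.sqrt ε) * D : ℝ) ≤
        (((Finset.univ : Finset (Fin D)).filter (fun y =>
            ((1 - Real.sqrt ε) * K : ℝ) ≤ ((S.image (fun x => Γ x y)).card : ℝ))).card : ℝ) := by
  intro S hS
  set s : ℝ := Real.sqrt ε with hs
  have hs0 : 0 ≤ s := Real.sqrt_nonneg ε
  have hss : s * s = ε := Real.mul_self_sqrt hε0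
  -- the neighborhood equals the sigma of the per-seed images
  have himg : ((S ×ˢ (Finset.univ : Finset (Fin D))).image
      (fun p => (⟨p.2, Γ p.1 p.2⟩ : Σ y : Fin D, Fin (M y))))
      = Finset.sigma Finset.univ (fun y => S.image (fun x => Γ x y)) := by
    ext ⟨y, v⟩
    simp only [Finset.mem_image, Finset.mem_product, Finset.mem_sigma, Finset.mem_univ,
      true_and, Sigma.mk.inj_iff]
    constructor
    · rintro ⟨⟨a, b⟩, ⟨ha, -⟩, hb, hv⟩
      subst hb
      exact ⟨a, ha, eq_of_heq hv⟩
    · rintro ⟨a, ha, hv⟩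
      exact ⟨(a, y), ⟨ha, trivial⟩, rfl, heq_of_eq hv⟩
  set c : Fin D → ℝ := fun y => ((S.image (fun x => Γ x y)).card : ℝ) with hc
  have hsum : ((1 - ε) * D * K : ℝ) ≤ ∑ y : Fin D, c y := by
    have := hexp S hS
    rw [himg, Finset.card_sigma] at this
    simpa [hc] using this
  have hle : ∀ y : Fin D, c y ≤ K := by
    intro y
    have := Finset.card_image_le (s := S) (f := fun x => Γ x y)
    rw [hS] at this
    simp only [hc]
    exact_mod_cast this
  set G := (Finset.univ : Finset (Fin D)).filter (fun y => ((1 - s) * K : ℝ) ≤ c y) with hG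
  set B := (Finset.univ : Finset (Fin D)).filter (fun y => ¬ ((1 - s) * K : ℝ) ≤ c y) with hB
  have hGB : G.card + B.card = D := by
    rw [hG, hB, Finset.card_filter_add_card_filter_not]
    simp
  have hBle : (B.card : ℝ) ≤ s * D := by
    rcases B.eq_empty_or_nonempty with hBe | hBne
    · simp [hBe]
      positivity
    · have h2 : (B.card : ℝ) * (s * K) < ∑ y ∈ B, ((K : ℝ) - c y) := by
        have heach : ∀ y ∈ B, s * (K : ℝ) < (K : ℝ) - c y := by
          intro y hy
          rw [hB, Finset.mem_filter] at hy
          have := hy.2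
          push_neg at this
          nlinarith [this]
        have := Finset.sum_lt_sum_of_nonempty hBne heach
        rw [Finset.sum_const, nsmul_eq_mul] at this
        exact this
      have h1 : ∑ y ∈ B, ((K : ℝ) - c y) ≤ ε * D * K := by
        have hmono : ∑ y ∈ B, ((K : ℝ) - c y) ≤ ∑ y : Fin D, ((K : ℝ) - c y) := by
          apply Finset.sum_le_sum_of_subset_of_nonneg (Finset.subset_univ _)
          intro y _ _
          linarith [hle y]
        have heq : ∑ y : Fin D, ((K : ℝ) - c y) = D * K - ∑ y : Fin D, c y := by
          rw [Finset.sum_sub_distrib, Finset.sum_const, Finset.card_univ]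
          simp [mul_comm]
        rw [heq] at hmono
        nlinarith [hsum]
      have hkey : (B.card : ℝ) * (s * K) < (s * D) * (s * K) := by
        calc (B.card : ℝ) * (s * K) < ε * D * K := lt_of_lt_of_le h2 h1
        _ = (s * D) * (s * K) := by rw [← hss]; ring
      have hsK : 0 < s * K := by
        by_contra h
        push_neg at h
        have hsK0 : s * K = 0 := le_antisymm h (by positivity)
        rw [hsK0] at hkey
        simp at hkey
      exact le_of_lt ((mul_lt_mul_iff_of_pos_right hsK).mp hkey)
  have hGcard : (G.card : ℝ) = D - B.card := by
    have : (G.card : ℝ) + B.card = D := by exact_mod_cast hGB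
    linarith
  rw [hG] at hGcard ⊢
  rw [hGcard]
  nlinarith [Nat.cast_nonneg (α := ℝ) D]
end

section
/- Fix 0 < p < 1 and let X₁,…,X_n be independent geometric random variables on ℕ with Pr[X_i = k] = (1−p)^{k−1}·p for each k ≥ 1. Let X = Σ X_i and μ = E[X] = n/p. Then for all β > 0, Pr[X ≥ (1+β)μ] ≤ exp(−nβ²/(2(1+β))). -/
set_option maxHeartbeats 1000000

open MeasureTheory ProbabilityTheory Finset

private lemma log_one_add_le_aux {x : ℝ} (hx : 0 ≤ x) :
    Real.log (1 + x) ≤ x - x ^ 2 / (2 * (1 + x)) := by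
  have h1x : (0:ℝ) < 1 + x := by linarith
  set f : ℝ → ℝ := fun u => u / 2 - (2 * u)⁻¹ - Real.log u with hf
  have hderiv : ∀ u : ℝ, 0 < u → HasDerivAt f ((u - 1) ^ 2 / (2 * u ^ 2)) u := by
    intro u hu
    have h1 : HasDerivAt (fun u : ℝ => u / 2) (1 / 2) u := by
      simpa using (hasDerivAt_id u).div_const 2
    have h2 : HasDerivAt (fun u : ℝ => (2 * u)⁻¹) (-2 / (2 * u) ^ 2) u := by
      have h2' : HasDerivAt (fun u : ℝ => 2 * u) 2 u := by
        simpa using (hasDerivAt_id u).const_mul 2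
      exact h2'.inv (by positivity)
    have h3 : HasDerivAt Real.log u⁻¹ u := Real.hasDerivAt_log hu.ne'
    have := (h1.sub h2).sub h3
    refine this.congr_deriv ?_
    field_simp
    ring
  have hmono : MonotoneOn f (Set.Ici 1) := by
    apply monotoneOn_of_deriv_nonneg (convex_Ici 1)
    · intro u hu
      exact ((hderiv u (lt_of_lt_of_le one_pos hu)).continuousAt).continuousWithinAt
    · intro u hu
      rw [interior_Ici] at hu
      exact ((hderiv u (lt_trans one_pos hu)).differentiableAt).differentiableWithinAt
    · intro u hu
      rw [interior_Ici] at hu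
      have hu0 : 0 < u := lt_trans one_pos hu
      rw [(hderiv u hu0).deriv]
      positivity
  have hle : f 1 ≤ f (1 + x) :=
    hmono Set.self_mem_Ici (by simp [Set.mem_Ici]; linarith) (by linarith)
  have hf1 : f 1 = 0 := by simp [hf]
  have hfx : f (1 + x) = (1 + x) / 2 - (2 * (1 + x))⁻¹ - Real.log (1 + x) := rfl
  have heq : (1 + x) / 2 - (2 * (1 + x))⁻¹ = x - x ^ 2 / (2 * (1 + x)) := by
    field_simp
    ring
  rw [hfx, heq] at hle
  linarith [hf1 ▸ hle]

private lemma geom_mgf_aux {Ω : Type*} [MeasurableSpace Ω] (μ : Measure Ω)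
    [IsProbabilityMeasure μ] (p : ℝ) (hp0 : 0 < p) (hp1 : p < 1) (Y : Ω → ℕ)
    (hY : Measurable Y)
    (hgeom : ∀ k : ℕ, 1 ≤ k → μ {ω | Y ω = k} = ENNReal.ofReal ((1 - p) ^ (k - 1) * p))
    (t : ℝ) (hqr : (1 - p) * Real.exp t < 1) :
    Integrable (fun ω => Real.exp (t * (Y ω : ℝ))) μ ∧
      mgf (fun ω => (Y ω : ℝ)) μ t = p * Real.exp t / (1 - (1 - p) * Real.exp t) := by
  have hq0 : (0:ℝ) ≤ 1 - p := by linarith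
  have hq1 : (1:ℝ) - p < 1 := by linarith
  have hx0 : (0:ℝ) ≤ (1 - p) * Real.exp t := by positivity
  have hmeasfib : ∀ k : ℕ, MeasurableSet {ω | Y ω = k} := fun k =>
    hY (measurableSet_singleton k)
  -- total measure of fibers k ≥ 1 is 1
  have hsum1 : ∑' k : ℕ, μ {ω | Y ω = k + 1} = 1 := by
    have e : ∀ k : ℕ, μ {ω | Y ω = k + 1} = ENNReal.ofReal ((1 - p) ^ k * p) := fun k => by
      simpa using hgeom (k + 1) (Nat.le_add_left 1 k)
    have hsummable : Summable (fun k : ℕ => (1 - p) ^ k * p) :=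
      (summable_geometric_of_lt_one hq0 hq1).mul_right p
    have hval : ∑' k : ℕ, (1 - p) ^ k * p = 1 := by
      rw [tsum_mul_right, tsum_geometric_of_lt_one hq0 hq1]
      rw [sub_sub_cancel, inv_mul_cancel₀ hp0.ne']
    rw [tsum_congr e, ← ENNReal.ofReal_tsum_of_nonneg (fun k => by positivity) hsummable,
      hval, ENNReal.ofReal_one]
  have hzero : μ {ω | Y ω = 0} = 0 := by
    have hUnion : ∑' k : ℕ, μ {ω | Y ω = k} = 1 := by
      have hcov : (⋃ k : ℕ, {ω | Y ω = k}) = Set.univ := by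
        ext ω; simp
      have hdisj : Pairwise (Function.onFun Disjoint fun k : ℕ => {ω | Y ω = k}) := by
        intro a b hab
        refine Set.disjoint_left.mpr fun ω h1 h2 => hab ?_
        simp only [Set.mem_setOf_eq] at h1 h2
        rw [← h1, ← h2]
      rw [← measure_iUnion hdisj hmeasfib, hcov, measure_univ]
    have hsplit := tsum_eq_zero_add' (f := fun k : ℕ => μ {ω | Y ω = k}) ENNReal.summable
    rw [hsplit, hsum1] at hUnion
    have : μ {ω | Y ω = 0} + 1 = 0 + 1 := by rw [hUnion, zero_add]
    exact ENNReal.add_left_inj ENNReal.one_ne_top |>.mp this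
  -- the pushforward measure
  set ν : Measure ℕ := μ.map Y with hνdef
  have hν : ∀ k : ℕ, ν {k} = μ {ω | Y ω = k} := fun k => by
    rw [hνdef, Measure.map_apply hY (measurableSet_singleton k)]
    rfl
  set g : ℕ → ℝ := fun k => Real.exp (t * k) with hgdef
  have hgm : Measurable g := measurable_from_top
  set c : ℝ := p * Real.exp t with hcdef
  set x : ℝ := (1 - p) * Real.exp t with hxdef
  set h : ℕ → ℝ := fun k => if k = 0 then 0 else c * x ^ (k - 1) with hhdef
  have hh0 : h 0 = 0 := rfl
  have hhsucc : ∀ m : ℕ, h (m + 1) = c * x ^ m := fun m => by simp [hhdef]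
  have hhnonneg : ∀ k, 0 ≤ h k := by
    intro k
    cases k with
    | zero => simp [hh0]
    | succ m =>
      rw [hhsucc]
      have : 0 ≤ c := by positivity
      positivity
  have hreal : ∀ m : ℕ, Real.exp (t * ((m:ℝ) + 1)) * ((1 - p) ^ m * p) = c * x ^ m := by
    intro m
    have he : Real.exp (t * ((m:ℝ) + 1)) = Real.exp t ^ m * Real.exp t := by
      rw [mul_add, mul_one, Real.exp_add, mul_comm t (m:ℝ), Real.exp_nat_mul]
    rw [he, hcdef, hxdef, mul_pow]
    ring
  have hsummable_h : Summable h := by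
    apply (summable_nat_add_iff 1).mp
    refine ((summable_geometric_of_lt_one hx0 hqr).mul_left c).congr fun n => ?_
    rw [hhsucc]
  have htsum_h : ∑' k, h k = c / (1 - x) := by
    rw [hsummable_h.tsum_eq_zero_add, hh0, zero_add]
    have : ∀ n : ℕ, h (n + 1) = c * x ^ n := hhsucc
    rw [tsum_congr this, tsum_mul_left, tsum_geometric_of_lt_one hx0 hqr, div_eq_mul_inv]
  have hmeasnum : ∀ m : ℕ, ν {m + 1} = ENNReal.ofReal ((1 - p) ^ m * p) := fun m => by
    rw [hν]
    simpa using hgeom (m + 1) (Nat.le_add_left 1 m)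
  have hν0 : ν {0} = 0 := by rw [hν]; exact hzero
  -- pointwise identity in ℝ≥0∞
  have hptE : ∀ k : ℕ, ENNReal.ofReal (g k) * ν {k} = ENNReal.ofReal (h k) := by
    intro k
    cases k with
    | zero => simp [hν0, hh0]
    | succ m =>
      rw [hmeasnum, hhsucc, ← ENNReal.ofReal_mul (Real.exp_nonneg _)]
      congr 1
      rw [← hreal m]
      push_cast
      ring
  -- pointwise identity in ℝ
  have hptR : ∀ k : ℕ, (ν {k}).toReal • g k = h k := by
    intro k
    cases k with
    | zero => simp [hν0, hh0]
    | succ m =>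
      rw [hmeasnum, hhsucc, ENNReal.toReal_ofReal (by positivity), smul_eq_mul,
        mul_comm, ← hreal m]
      simp only [hgdef]
      push_cast
      ring
  have hint_g : Integrable g ν := by
    refine ⟨hgm.aestronglyMeasurable, ?_⟩
    rw [hasFiniteIntegral_iff_ofReal (Filter.Eventually.of_forall fun k => Real.exp_nonneg _)]
    rw [lintegral_countable' (fun k => ENNReal.ofReal (g k))]
    rw [tsum_congr hptE, ← ENNReal.ofReal_tsum_of_nonneg hhnonneg hsummable_h]
    exact ENNReal.ofReal_lt_top
  have hint : Integrable (fun ω => Real.exp (t * (Y ω : ℝ))) μ := by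
    have := (integrable_map_measure hgm.aestronglyMeasurable hY.aemeasurable).mp hint_g
    exact this
  refine ⟨hint, ?_⟩
  have : mgf (fun ω => (Y ω : ℝ)) μ t = ∫ k, g k ∂ν := by
    rw [mgf, hνdef, integral_map hY.aemeasurable hgm.aestronglyMeasurable]
  rw [this, integral_countable' hint_g]; simp only [measureReal_def]; rw [tsum_congr hptR, htsum_h, hcdef, hxdef]

/-- Chernoff bound for sums of i.i.d.-type geometric random variables on
`{1,2,…}` with success probability `p`: for `X = Σ X_i` with mean `μ = n/p`,
`Pr[X ≥ (1+β)μ] ≤ exp(−nβ²/(2(1+β)))`. -/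
theorem geometric_sum_tail {Ω : Type*} [MeasurableSpace Ω] (μ : Measure Ω)
    [IsProbabilityMeasure μ] {n : ℕ} (p : ℝ) (hp0 : 0 < p) (hp1 : p < 1)
    (X : Fin n → Ω → ℕ) (hmeas : ∀ i, Measurable (X i))
    (hindep : iIndepFun X μ)
    (hgeom : ∀ (i : Fin n) (k : ℕ), 1 ≤ k →
      μ {ω | X i ω = k} = ENNReal.ofReal ((1 - p) ^ (k - 1) * p))
    (β : ℝ) (hβ : 0 < β) :
    (μ {ω | (1 + β) * ((n : ℝ) / p) ≤ ∑ i, (X i ω : ℝ)}).toReal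
      ≤ Real.exp (-(n : ℝ) * β ^ 2 / (2 * (1 + β))) := by
  have h1β : (0:ℝ) < 1 + β := by linarith
  have hd : (0:ℝ) < 1 + β - p * β := by nlinarith
  set r : ℝ := (1 + β) / (1 + β - p * β) with hrdef
  have hr0 : 0 < r := div_pos h1β hd
  have hr1 : 1 ≤ r := (one_le_div hd).mpr (by nlinarith)
  set t : ℝ := Real.log r with htdef
  have ht : 0 ≤ t := Real.log_nonneg hr1
  have het : Real.exp t = r := Real.exp_log hr0
  have hqr : (1 - p) * Real.exp t < 1 := by
    rw [het, hrdef, ← mul_div_assoc, div_lt_one hd]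
    nlinarith
  have h1mq : 1 - (1 - p) * r = p / (1 + β - p * β) := by
    rw [hrdef]; field_simp; ring
  have hmgf_val : p * Real.exp t / (1 - (1 - p) * Real.exp t) = 1 + β := by
    rw [het, h1mq, hrdef]
    field_simp
  have key := fun i => geom_mgf_aux μ p hp0 hp1 (X i) (hmeas i) (hgeom i) t hqr
  set Y : Fin n → Ω → ℝ := fun i ω => (X i ω : ℝ) with hYdef
  have hYmeas : ∀ i, Measurable (Y i) := fun i => measurable_from_top.comp (hmeas i)
  have hindep' : iIndepFun Y μ :=
    hindep.comp (fun _ => (Nat.cast : ℕ → ℝ)) (fun _ => measurable_from_top)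
  have hint : ∀ i, Integrable (fun ω => Real.exp (t * Y i ω)) μ := fun i => (key i).1
  have hmgf : ∀ i, mgf (Y i) μ t = 1 + β := fun i => (key i).2.trans hmgf_val
  have hintS : Integrable (fun ω => Real.exp (t * (∑ i, Y i) ω)) μ :=
    hindep'.integrable_exp_mul_sum hYmeas (fun i _ => hint i)
  set a : ℝ := (1 + β) * ((n : ℝ) / p) with hadef
  have hset : {ω | a ≤ ∑ i, (X i ω : ℝ)} = {ω | a ≤ (∑ i, Y i) ω} := by
    ext ω
    simp [hYdef, Finset.sum_apply]
  have hchern : (μ {ω | a ≤ (∑ i, Y i) ω}).toReal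
      ≤ Real.exp (-t * a) * mgf (∑ i, Y i) μ t :=
    measure_ge_le_exp_mul_mgf a ht hintS
  have hmgfS : mgf (∑ i, Y i) μ t = (1 + β) ^ n := by
    rw [hindep'.mgf_sum hYmeas]
    simp [hmgf]
  have ha0 : 0 ≤ a := by positivity
  have hta : (n : ℝ) * β ≤ t * a := by
    have h1 : p * β / (1 + β) ≤ t := by
      have h2 := Real.one_sub_inv_le_log_of_pos hr0
      have h3 : 1 - r⁻¹ = p * β / (1 + β) := by
        rw [hrdef]
        field_simp
        ring
      rw [h3] at h2
      exact h2
    calc (n : ℝ) * β = (p * β / (1 + β)) * a := by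
          rw [hadef]; field_simp
      _ ≤ t * a := mul_le_mul_of_nonneg_right h1 ha0
  have hlog : Real.log (1 + β) ≤ β - β ^ 2 / (2 * (1 + β)) := log_one_add_le_aux hβ.le
  have hfinal : Real.exp (-t * a) * (1 + β) ^ n
      ≤ Real.exp (-(n : ℝ) * β ^ 2 / (2 * (1 + β))) := by
    have hpow : ((1:ℝ) + β) ^ n = Real.exp ((n : ℝ) * Real.log (1 + β)) := by
      rw [Real.exp_nat_mul, Real.exp_log h1β]
    rw [hpow, ← Real.exp_add]
    apply Real.exp_le_exp.mpr
    have hmul : (n : ℝ) * Real.log (1 + β) ≤ (n : ℝ) * (β - β ^ 2 / (2 * (1 + β))) :=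
      mul_le_mul_of_nonneg_left hlog (Nat.cast_nonneg n)
    have hring : (n : ℝ) * (β - β ^ 2 / (2 * (1 + β)))
        = (n : ℝ) * β + -(n : ℝ) * β ^ 2 / (2 * (1 + β)) := by ring
    linarith [hring ▸ hmul]
  calc (μ {ω | a ≤ ∑ i, (X i ω : ℝ)}).toReal
      = (μ {ω | a ≤ (∑ i, Y i) ω}).toReal := by rw [hset]
    _ ≤ Real.exp (-t * a) * mgf (∑ i, Y i) μ t := hchern
    _ = Real.exp (-t * a) * (1 + β) ^ n := by rw [hmgfS]
    _ ≤ Real.exp (-(n : ℝ) * β ^ 2 / (2 * (1 + β))) := hfinal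
end

section
/- Let G be an undirected graph on n vertices with normalized adjacency matrix having second eigenvalue λ = λ₂ in absolute value bounded by λ (i.e., all nontrivial eigenvalues are at most λ in absolute value). Then for any subsets X, Y of vertices: |e(X,Y) − vol(X)·vol(Y)/vol(G)| ≤ λ·√(vol(X)·vol(Y)·vol(X̄)·vol(Ȳ))/vol(G), where e(X,Y) counts edges with one endpoint in X and the other in Y, vol(S) = Σ_{u∈S} deg(u), and X̄, Ȳ are complements. -/
open Finset Matrix

/-- Volume of a vertex set: the sum of degrees. -/
def gvol {n : ℕ} (G : SimpleGraph (Fin n)) [DecidableRel G.Adj]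
    (S : Finset (Fin n)) : ℕ :=
  ∑ u ∈ S, G.degree u

/-- Number of (ordered) edges between `X` and `Y`: pairs `(u,v)` with `u ∈ X`,
`v ∈ Y` and `u ∼ v` (edges inside `X ∩ Y` are counted twice). -/
def gedges {n : ℕ} (G : SimpleGraph (Fin n)) [DecidableRel G.Adj]
    (X Y : Finset (Fin n)) : ℕ :=
  ∑ u ∈ X, ∑ v ∈ Y, if G.Adj u v then 1 else 0

/-- Normalized adjacency matrix `D^{-1/2} A D^{-1/2}`. -/
noncomputable def normAdj {n : ℕ} (G : SimpleGraph (Fin n)) [DecidableRel G.Adj] :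
    Matrix (Fin n) (Fin n) ℝ :=
  fun u v => (if G.Adj u v then (1 : ℝ) else 0) /
    (Real.sqrt (G.degree u) * Real.sqrt (G.degree v))

lemma parseval {n : ℕ} (b : OrthonormalBasis (Fin n) ℝ (EuclideanSpace ℝ (Fin n)))
    (x y : Fin n → ℝ) :
    ∑ i, (∑ u, x u * b i u) * (∑ u, b i u * y u) = ∑ u, x u * y u := by
  have h := b.sum_inner_mul_inner ((WithLp.equiv 2 (Fin n → ℝ)).symm x)
      ((WithLp.equiv 2 (Fin n → ℝ)).symm y)
  simpa [PiLp.inner_apply, RCLike.inner_apply, conj_trivial, mul_comm] using h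

lemma sym_dot {n : ℕ} {A : Matrix (Fin n) (Fin n) ℝ} (hA : A.IsHermitian)
    (x y : Fin n → ℝ) :
    ∑ u, x u * (A *ᵥ y) u = ∑ u, (A *ᵥ x) u * y u := by
  have hAt : Aᵀ = A := by
    ext i j; simpa using congrFun (congrFun hA.eq i) j
  calc ∑ u, x u * (A *ᵥ y) u = x ⬝ᵥ (A *ᵥ y) := rfl
    _ = (x ᵥ* A) ⬝ᵥ y := Matrix.dotProduct_mulVec _ _ _
    _ = (A *ᵥ x) ⬝ᵥ y := by rw [← Matrix.mulVec_transpose, hAt]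
    _ = ∑ u, (A *ᵥ x) u * y u := rfl

lemma basis_vec_ne_zero {n : ℕ} {A : Matrix (Fin n) (Fin n) ℝ} (hA : A.IsHermitian)
    (i : Fin n) : (fun u => hA.eigenvectorBasis i u) ≠ (0 : Fin n → ℝ) := by
  have h := hA.eigenvectorBasis.orthonormal.1 i
  intro hz
  rw [show (hA.eigenvectorBasis i) = 0 from ?_] at h
  · simp at h
  · ext j; exact congrFun hz j

lemma basis_orth {n : ℕ} {A : Matrix (Fin n) (Fin n) ℝ} (hA : A.IsHermitian)
    (i j : Fin n) :
    (∑ u, hA.eigenvectorBasis i u * hA.eigenvectorBasis j u) = if i = j then (1:ℝ) else 0 := by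
  have h := (orthonormal_iff_ite.mp hA.eigenvectorBasis.orthonormal) i j
  simpa [PiLp.inner_apply, RCLike.inner_apply, conj_trivial, mul_comm] using h

lemma spectral_bilinear_bound {n : ℕ} (hn : 2 ≤ n) {A : Matrix (Fin n) (Fin n) ℝ}
    (hA : A.IsHermitian) (s : Fin n → ℝ) (hAs : A *ᵥ s = s) (lam : ℝ)
    (heig : ∀ (c : ℝ) (v : Fin n → ℝ), v ≠ 0 → (∑ u, v u * s u) = 0 →
      A *ᵥ v = c • v → |c| ≤ lam) :
    0 ≤ lam ∧ ∀ w₁ w₂ : Fin n → ℝ, (∑ u, s u * w₁ u) = 0 → (∑ u, s u * w₂ u) = 0 →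
      |∑ u, w₁ u * (A *ᵥ w₂) u| ≤
        lam * (Real.sqrt (∑ u, w₁ u * w₁ u) * Real.sqrt (∑ u, w₂ u * w₂ u)) := by
  classical
  set c := hA.eigenvalues with hc
  set B : Fin n → Fin n → ℝ := fun i u => hA.eigenvectorBasis i u with hB
  have hbv : ∀ i, A *ᵥ B i = c i • B i := fun i => hA.mulVec_eigenvectorBasis i
  have horth : ∀ i j, (∑ u, B i u * B j u) = if i = j then (1:ℝ) else 0 :=
    fun i j => basis_orth hA i j
  have hbne : ∀ i, B i ≠ 0 := fun i => basis_vec_ne_zero hA i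
  have hpars : ∀ x y : Fin n → ℝ,
      ∑ i, (∑ u, x u * B i u) * (∑ u, B i u * y u) = ∑ u, x u * y u :=
    fun x y => parseval hA.eigenvectorBasis x y
  set t : Fin n → ℝ := fun i => ∑ u, B i u * s u with ht
  have F2 : ∀ i, t i = 0 → |c i| ≤ lam := by
    intro i hi
    exact heig (c i) (B i) (hbne i) hi (hbv i)
  have F1 : ∀ i, t i ≠ 0 → c i = 1 := by
    intro i hi
    have key : c i * t i = 1 * t i := by
      calc c i * t i = ∑ u, (c i • B i) u * s u := by
            simp only [ht, Pi.smul_apply, smul_eq_mul, Finset.mul_sum, mul_assoc]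
        _ = ∑ u, (A *ᵥ B i) u * s u := by rw [hbv i]
        _ = ∑ u, B i u * (A *ᵥ s) u := (sym_dot hA (B i) s).symm
        _ = 1 * t i := by rw [hAs, ht, one_mul]
    exact mul_right_cancel₀ hi key
  suffices h : 0 ≤ lam ∧ ∀ (w : Fin n → ℝ), (∑ u, s u * w u) = 0 →
      ∀ k, |c k| ≤ lam ∨ (∑ u, B k u * w u) = 0 by
    obtain ⟨hlam0, hk⟩ := h
    refine ⟨hlam0, fun w₁ w₂ h1 h2 => ?_⟩
    set a₁ : Fin n → ℝ := fun i => ∑ u, B i u * w₁ u with ha₁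
    set a₂ : Fin n → ℝ := fun i => ∑ u, B i u * w₂ u with ha₂
    have hcomm : ∀ (w : Fin n → ℝ) i, (∑ u, w u * B i u) = ∑ u, B i u * w u := by
      intro w i; exact Finset.sum_congr rfl fun u _ => mul_comm _ _
    have hrepr : (∑ u, w₁ u * (A *ᵥ w₂) u) = ∑ i, c i * (a₁ i * a₂ i) := by
      have hterm : ∀ i, (∑ u, B i u * (A *ᵥ w₂) u) = c i * a₂ i := by
        intro i
        rw [sym_dot hA (B i) w₂, hbv i]
        simp only [ha₂, Pi.smul_apply, smul_eq_mul, mul_assoc, ← Finset.mul_sum]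
      rw [← hpars w₁ (A *ᵥ w₂)]
      refine Finset.sum_congr rfl fun i _ => ?_
      rw [hterm i, hcomm w₁ i]
      ring
    have hP1 : (∑ i, a₁ i ^ 2) = ∑ u, w₁ u * w₁ u := by
      rw [← hpars w₁ w₁]
      refine Finset.sum_congr rfl fun i _ => by rw [ha₁, hcomm w₁ i]; ring
    have hP2 : (∑ i, a₂ i ^ 2) = ∑ u, w₂ u * w₂ u := by
      rw [← hpars w₂ w₂]
      refine Finset.sum_congr rfl fun i _ => by rw [ha₂, hcomm w₂ i]; ring
    rw [hrepr, ← hP1, ← hP2]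
    have hCS : ∑ i, |a₁ i| * |a₂ i| ≤
        Real.sqrt (∑ i, a₁ i ^ 2) * Real.sqrt (∑ i, a₂ i ^ 2) := by
      have h := Finset.sum_mul_sq_le_sq_mul_sq Finset.univ
        (fun i => |a₁ i|) (fun i => |a₂ i|)
      simp only [sq_abs] at h
      have hnn : 0 ≤ ∑ i, |a₁ i| * |a₂ i| :=
        Finset.sum_nonneg fun i _ => by positivity
      calc ∑ i, |a₁ i| * |a₂ i| = Real.sqrt ((∑ i, |a₁ i| * |a₂ i|) ^ 2) :=
            (Real.sqrt_sq hnn).symm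
        _ ≤ Real.sqrt ((∑ i, a₁ i ^ 2) * ∑ i, a₂ i ^ 2) := Real.sqrt_le_sqrt h
        _ = _ := Real.sqrt_mul (by positivity) _
    calc |∑ i, c i * (a₁ i * a₂ i)| ≤ ∑ i, |c i * (a₁ i * a₂ i)| :=
          Finset.abs_sum_le_sum_abs _ _
      _ ≤ ∑ i, lam * (|a₁ i| * |a₂ i|) := by
          refine Finset.sum_le_sum fun i _ => ?_
          rcases hk w₁ h1 i with h | h
          · rw [abs_mul, abs_mul]
            exact mul_le_mul_of_nonneg_right h (by positivity)
          · have : a₁ i = 0 := h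
            simp [this]
      _ = lam * ∑ i, |a₁ i| * |a₂ i| := by rw [Finset.mul_sum]
      _ ≤ lam * (Real.sqrt (∑ i, a₁ i ^ 2) * Real.sqrt (∑ i, a₂ i ^ 2)) :=
          mul_le_mul_of_nonneg_left hCS hlam0
  -- prove the dichotomy
  by_cases H2 : ∃ i j, i ≠ j ∧ t i ≠ 0 ∧ t j ≠ 0
  · obtain ⟨i, j, hij, hti, htj⟩ := H2
    have hci : c i = 1 := F1 i hti
    have hcj : c j = 1 := F1 j htj
    set v : Fin n → ℝ := t j • B i - t i • B j with hv
    have hexp : ∀ (x : Fin n → ℝ), (∑ u, x u * v u) =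
        t j * (∑ u, x u * B i u) - t i * (∑ u, x u * B j u) := by
      intro x
      rw [Finset.mul_sum, Finset.mul_sum, ← Finset.sum_sub_distrib]
      refine Finset.sum_congr rfl fun u _ => ?_
      simp only [hv, Pi.sub_apply, Pi.smul_apply, smul_eq_mul]
      ring
    have hiv : (∑ u, B i u * v u) = t j := by
      rw [hexp (B i), horth i i, horth i j, if_pos rfl, if_neg hij]
      ring
    have hv0 : v ≠ 0 := by
      intro h
      apply htj
      rw [← hiv, h]
      simp
    have hsv : (∑ u, v u * s u) = 0 := by
      have e : (∑ u, v u * s u) = ∑ u, s u * v u :=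
        Finset.sum_congr rfl fun u _ => mul_comm _ _
      rw [e, hexp s]
      have e1 : (∑ u, s u * B i u) = t i :=
        Finset.sum_congr rfl fun u _ => mul_comm _ _
      have e2 : (∑ u, s u * B j u) = t j :=
        Finset.sum_congr rfl fun u _ => mul_comm _ _
      rw [e1, e2]; ring
    have hAv : A *ᵥ v = (1:ℝ) • v := by
      rw [hv, Matrix.mulVec_sub, Matrix.mulVec_smul, Matrix.mulVec_smul, hbv i, hbv j,
        hci, hcj]
      simp
    have hlam1 : 1 ≤ lam := by simpa using heig 1 v hv0 hsv hAv
    refine ⟨le_trans zero_le_one hlam1, fun w hw k => ?_⟩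
    left
    by_cases hk : t k = 0
    · exact F2 k hk
    · rw [F1 k hk]; simpa using hlam1
  · push_neg at H2
    have H2' : ∀ i j, i ≠ j → t i ≠ 0 → t j = 0 := fun i j hij hti => H2 i j hij hti
    have hi0 : ∃ i, t i = 0 := by
      by_cases h : t ⟨0, by omega⟩ = 0
      · exact ⟨_, h⟩
      · exact ⟨⟨1, by omega⟩, H2' ⟨0, by omega⟩ ⟨1, by omega⟩
          (by simp [Fin.ext_iff]) h⟩
    obtain ⟨i0, hi0⟩ := hi0
    refine ⟨le_trans (abs_nonneg _) (F2 i0 hi0), fun w hw k => ?_⟩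
    by_cases hk : t k = 0
    · exact Or.inl (F2 k hk)
    · right
      have hsum := hpars s w
      have e1 : ∀ i, (∑ u, s u * B i u) = t i :=
        fun i => Finset.sum_congr rfl fun u _ => mul_comm _ _
      rw [hw] at hsum
      have : (∑ i, t i * (∑ u, B i u * w u)) = 0 := by
        rw [← hsum]
        exact Finset.sum_congr rfl fun i _ => by rw [e1 i]
      rw [Finset.sum_eq_single k (fun i _ hik => by rw [H2' k i (Ne.symm hik) hk, zero_mul])
        (fun h => absurd (Finset.mem_univ k) h)] at this
      rcases mul_eq_zero.mp this with h | h
      · exact absurd h hk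
      · exact h

lemma normAdj_herm {n : ℕ} (G : SimpleGraph (Fin n)) [DecidableRel G.Adj] :
    (normAdj G).IsHermitian := by
  ext i j
  simp only [conjTranspose_apply, normAdj, star_trivial]
  have h : (if G.Adj j i then (1:ℝ) else 0) = (if G.Adj i j then (1:ℝ) else 0) := by
    simp [G.adj_comm j i]
  rw [h, mul_comm]

lemma normAdj_fixed {n : ℕ} (G : SimpleGraph (Fin n)) [DecidableRel G.Adj]
    (hdeg : ∀ u, 0 < G.degree u) :
    normAdj G *ᵥ (fun u => Real.sqrt (G.degree u)) = fun u => Real.sqrt (G.degree u) := by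
  funext u
  have hsu : (0:ℝ) < Real.sqrt (G.degree u) := Real.sqrt_pos.mpr (by
    exact_mod_cast hdeg u)
  have hstep : ∀ v, normAdj G u v * Real.sqrt (G.degree v) =
      (if G.Adj u v then (1:ℝ) else 0) * (Real.sqrt (G.degree u))⁻¹ := by
    intro v
    have hsv : (0:ℝ) < Real.sqrt (G.degree v) := Real.sqrt_pos.mpr (by
      exact_mod_cast hdeg v)
    by_cases h : G.Adj u v <;> simp [normAdj, h]
    field_simp
  have hsum : ∑ v, (if G.Adj u v then (1:ℝ) else 0) = (G.degree u : ℝ) := by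
    simp [SimpleGraph.degree, SimpleGraph.neighborFinset_eq_filter, Finset.sum_boole]
  calc (normAdj G *ᵥ fun u => Real.sqrt (G.degree u)) u
      = ∑ v, normAdj G u v * Real.sqrt (G.degree v) := rfl
    _ = ∑ v, (if G.Adj u v then (1:ℝ) else 0) * (Real.sqrt (G.degree u))⁻¹ :=
        Finset.sum_congr rfl fun v _ => hstep v
    _ = (G.degree u : ℝ) * (Real.sqrt (G.degree u))⁻¹ := by
        rw [← Finset.sum_mul, hsum]
    _ = Real.sqrt (G.degree u) := by
        rw [← Real.mul_self_sqrt (by positivity : (0:ℝ) ≤ (G.degree u : ℝ))]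
        field_simp
        rw [Real.sqrt_sq hsu.le]

/-- Expander mixing lemma for general (irregular) graphs: if all eigenvalues of
the normalized adjacency matrix other than the top one (whose eigenvector is
`u ↦ √deg(u)`) are at most `λ` in absolute value, then for all vertex sets `X, Y`,
`|e(X,Y) − vol(X)vol(Y)/vol(G)| ≤ λ·√(vol(X)vol(Y)vol(X̄)vol(Ȳ))/vol(G)`. -/
theorem expander_mixing_general {n : ℕ} (G : SimpleGraph (Fin n))
    [DecidableRel G.Adj] (lam : ℝ)
    (hdeg : ∀ u, 0 < G.degree u)
    (heig : ∀ (c : ℝ) (v : Fin n → ℝ), v ≠ 0 →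
      (∑ u, v u * Real.sqrt (G.degree u)) = 0 →
      normAdj G *ᵥ v = c • v → |c| ≤ lam)
    (X Y : Finset (Fin n)) :
    |(gedges G X Y : ℝ) -
        (gvol G X : ℝ) * (gvol G Y : ℝ) / (gvol G Finset.univ : ℝ)|
      ≤ lam * Real.sqrt ((gvol G X : ℝ) * (gvol G Y : ℝ) *
          (gvol G Xᶜ : ℝ) * (gvol G Yᶜ : ℝ)) / (gvol G Finset.univ : ℝ) := by
  classical
  rcases Nat.lt_or_ge n 2 with hn | hn
  · obtain h0 | h1 : n = 0 ∨ n = 1 := by omega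
    · subst h0
      have hX : X = ∅ := Finset.eq_empty_of_isEmpty X
      have hY : Y = ∅ := Finset.eq_empty_of_isEmpty Y
      have hU : (Finset.univ : Finset (Fin 0)) = ∅ := Finset.eq_empty_of_isEmpty _
      simp [gvol, gedges, hX, hY, hU]
    · subst h1
      have h := hdeg 0
      have h2 := G.degree_lt_card_verts 0
      simp only [Fintype.card_fin] at h2
      omega
  · have hM := normAdj_herm G
    have hMs := normAdj_fixed G hdeg
    set s : Fin n → ℝ := fun u => Real.sqrt (G.degree u) with hs
    have heig' : ∀ (c : ℝ) (v : Fin n → ℝ), v ≠ 0 → (∑ u, v u * s u) = 0 →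
        normAdj G *ᵥ v = c • v → |c| ≤ lam := by
      intro c v hv hp hev
      exact heig c v hv (by simpa [hs] using hp) hev
    obtain ⟨hlam0, hbil⟩ := spectral_bilinear_bound hn hM s hMs lam heig'
    have hdegR : ∀ u, (0:ℝ) < (G.degree u : ℝ) := fun u => by exact_mod_cast hdeg u
    have hss : ∀ u, s u * s u = (G.degree u : ℝ) :=
      fun u => Real.mul_self_sqrt (le_of_lt (hdegR u))
    have hsne : ∀ u, s u ≠ 0 := fun u =>
      ne_of_gt (Real.sqrt_pos.mpr (hdegR u))
    have hcast : ∀ Z : Finset (Fin n),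
        ((gvol G Z : ℕ) : ℝ) = ∑ u ∈ Z, (G.degree u : ℝ) := fun Z => by
      simp [gvol]
    set xv : Fin n → ℝ := fun u => if u ∈ X then s u else 0 with hxv
    set yv : Fin n → ℝ := fun u => if u ∈ Y then s u else 0 with hyv
    set V := ((gvol G Finset.univ : ℕ) : ℝ) with hV
    have hVpos : 0 < V := by
      rw [hV, hcast]
      apply Finset.sum_pos (fun u _ => hdegR u)
      exact ⟨⟨0, by omega⟩, Finset.mem_univ _⟩
    have hvolz : ∀ Z : Finset (Fin n),
        (∑ u, s u * (if u ∈ Z then s u else 0)) = ((gvol G Z : ℕ) : ℝ) := by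
      intro Z
      calc ∑ u, s u * (if u ∈ Z then s u else 0)
          = ∑ u, (if u ∈ Z then (G.degree u : ℝ) else 0) :=
            Finset.sum_congr rfl fun u _ => by
              by_cases h : u ∈ Z <;> simp [h, hss u]
        _ = ∑ u ∈ Finset.univ ∩ Z, (G.degree u : ℝ) := Finset.sum_ite_mem _ _ _
        _ = ((gvol G Z : ℕ) : ℝ) := by rw [Finset.univ_inter, hcast Z]
    have hsx : (∑ u, s u * xv u) = ((gvol G X : ℕ) : ℝ) := hvolz X
    have hsy : (∑ u, s u * yv u) = ((gvol G Y : ℕ) : ℝ) := hvolz Y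
    have hxx : (∑ u, xv u * xv u) = ((gvol G X : ℕ) : ℝ) := by
      rw [← hsx]
      refine Finset.sum_congr rfl fun u _ => ?_
      by_cases h : u ∈ X <;> simp [hxv, h]
    have hyy : (∑ u, yv u * yv u) = ((gvol G Y : ℕ) : ℝ) := by
      rw [← hsy]
      refine Finset.sum_congr rfl fun u _ => ?_
      by_cases h : u ∈ Y <;> simp [hyv, h]
    have hss' : (∑ u, s u * s u) = V := by
      rw [hV, hcast]
      exact Finset.sum_congr rfl fun u _ => hss u
    -- the edge count identity
    have hecast : ((gedges G X Y : ℕ) : ℝ) =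
        ∑ u ∈ X, ∑ v ∈ Y, (if G.Adj u v then (1:ℝ) else 0) := by
      simp [gedges, apply_ite (Nat.cast : ℕ → ℝ)]
    have hedge : (∑ u, xv u * (normAdj G *ᵥ yv) u) = ((gedges G X Y : ℕ) : ℝ) := by
      have hterm : ∀ u v, xv u * (normAdj G u v * yv v) =
          (if u ∈ X then (if v ∈ Y then (if G.Adj u v then (1:ℝ) else 0) else 0) else 0) := by
        intro u v
        have h1 : Real.sqrt (G.degree u) ≠ 0 := hsne u
        have h2 : Real.sqrt (G.degree v) ≠ 0 := hsne v
        by_cases hu : u ∈ X <;> by_cases hvY : v ∈ Y <;> by_cases ha : G.Adj u v <;>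
          simp [hxv, hyv, hu, hvY, ha, normAdj, hs] <;> field_simp <;> ring
      calc ∑ u, xv u * (normAdj G *ᵥ yv) u
          = ∑ u, ∑ v, xv u * (normAdj G u v * yv v) := by
            refine Finset.sum_congr rfl fun u _ => ?_
            rw [show (normAdj G *ᵥ yv) u = ∑ v, normAdj G u v * yv v from rfl,
              Finset.mul_sum]
        _ = ∑ u, (if u ∈ X then (∑ v, (if v ∈ Y then (if G.Adj u v then (1:ℝ) else 0) else 0)) else 0) := by
            refine Finset.sum_congr rfl fun u _ => ?_
            rw [Finset.sum_congr rfl fun v _ => hterm u v]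
            split_ifs <;> simp
        _ = ∑ u ∈ Finset.univ ∩ X, ∑ v, (if v ∈ Y then (if G.Adj u v then (1:ℝ) else 0) else 0) :=
            Finset.sum_ite_mem _ _ _
        _ = ∑ u ∈ X, ∑ v ∈ Finset.univ ∩ Y, (if G.Adj u v then (1:ℝ) else 0) := by
            rw [Finset.univ_inter]
            exact Finset.sum_congr rfl fun u _ => Finset.sum_ite_mem _ _ _
        _ = ((gedges G X Y : ℕ) : ℝ) := by rw [Finset.univ_inter, hecast]
    have hsMy : (∑ u, s u * (normAdj G *ᵥ yv) u) = ((gvol G Y : ℕ) : ℝ) := by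
      rw [sym_dot hM s yv, hMs]
      exact hsy
    -- centered vectors
    set α := ((gvol G X : ℕ) : ℝ) / V with hα
    set β := ((gvol G Y : ℕ) : ℝ) / V with hβ
    set w₁ : Fin n → ℝ := xv - α • s with hw₁
    set w₂ : Fin n → ℝ := yv - β • s with hw₂
    have h1 : (∑ u, s u * w₁ u) = 0 := by
      have e : ∀ u, s u * w₁ u = s u * xv u - α * (s u * s u) := by
        intro u
        rw [hw₁]
        simp only [Pi.sub_apply, Pi.smul_apply, smul_eq_mul]
        ring
      rw [Finset.sum_congr rfl fun u _ => e u, Finset.sum_sub_distrib,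
        ← Finset.mul_sum, hsx, hss', hα]
      field_simp
      ring
    have h2 : (∑ u, s u * w₂ u) = 0 := by
      have e : ∀ u, s u * w₂ u = s u * yv u - β * (s u * s u) := by
        intro u
        rw [hw₂]
        simp only [Pi.sub_apply, Pi.smul_apply, smul_eq_mul]
        ring
      rw [Finset.sum_congr rfl fun u _ => e u, Finset.sum_sub_distrib,
        ← Finset.mul_sum, hsy, hss', hβ]
      field_simp
      ring
    have hcompl : ∀ Z : Finset (Fin n),
        ((gvol G Z : ℕ) : ℝ) + ((gvol G Zᶜ : ℕ) : ℝ) = V := by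
      intro Z
      rw [hcast, hcast, hV, hcast, Finset.sum_add_sum_compl]
    have hn1 : (∑ u, w₁ u * w₁ u) = ((gvol G X : ℕ) : ℝ) * ((gvol G Xᶜ : ℕ) : ℝ) / V := by
      have e : ∀ u, w₁ u * w₁ u =
          xv u * xv u - 2 * α * (s u * xv u) + α ^ 2 * (s u * s u) := by
        intro u
        rw [hw₁]
        simp only [Pi.sub_apply, Pi.smul_apply, smul_eq_mul]
        ring
      rw [Finset.sum_congr rfl fun u _ => e u, Finset.sum_add_distrib,
        Finset.sum_sub_distrib, ← Finset.mul_sum, ← Finset.mul_sum, hxx, hsx, hss', hα]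
      have hXc : ((gvol G Xᶜ : ℕ) : ℝ) = V - ((gvol G X : ℕ) : ℝ) := by
        have := hcompl X; linarith
      rw [hXc]
      field_simp
      ring
    have hn2 : (∑ u, w₂ u * w₂ u) = ((gvol G Y : ℕ) : ℝ) * ((gvol G Yᶜ : ℕ) : ℝ) / V := by
      have e : ∀ u, w₂ u * w₂ u =
          yv u * yv u - 2 * β * (s u * yv u) + β ^ 2 * (s u * s u) := by
        intro u
        rw [hw₂]
        simp only [Pi.sub_apply, Pi.smul_apply, smul_eq_mul]
        ring
      rw [Finset.sum_congr rfl fun u _ => e u, Finset.sum_add_distrib,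
        Finset.sum_sub_distrib, ← Finset.mul_sum, ← Finset.mul_sum, hyy, hsy, hss', hβ]
      have hYc : ((gvol G Yᶜ : ℕ) : ℝ) = V - ((gvol G Y : ℕ) : ℝ) := by
        have := hcompl Y; linarith
      rw [hYc]
      field_simp
      ring
    have hMw₂ : normAdj G *ᵥ w₂ = fun u => (normAdj G *ᵥ yv) u - β * s u := by
      rw [hw₂, Matrix.mulVec_sub, Matrix.mulVec_smul, hMs]
      rfl
    have hK : (∑ u, w₁ u * (normAdj G *ᵥ w₂) u) =
        ((gedges G X Y : ℕ) : ℝ) - ((gvol G X : ℕ) : ℝ) * ((gvol G Y : ℕ) : ℝ) / V := by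
      have e : ∀ u, w₁ u * (normAdj G *ᵥ w₂) u =
          xv u * (normAdj G *ᵥ yv) u - α * (s u * (normAdj G *ᵥ yv) u)
            - β * (s u * w₁ u) := by
        intro u
        rw [hMw₂]
        simp only [hw₁, Pi.sub_apply, Pi.smul_apply, smul_eq_mul]
        ring
      rw [Finset.sum_congr rfl fun u _ => e u, Finset.sum_sub_distrib,
        Finset.sum_sub_distrib, ← Finset.mul_sum, ← Finset.mul_sum, hedge, hsMy, h1, hα]
      ring
    have hb := hbil w₁ w₂ h1 h2
    rw [hK, hn1, hn2] at hb
    refine le_trans hb (le_of_eq ?_)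
    have hXnn : (0:ℝ) ≤ ((gvol G X : ℕ) : ℝ) := Nat.cast_nonneg _
    have hYnn : (0:ℝ) ≤ ((gvol G Y : ℕ) : ℝ) := Nat.cast_nonneg _
    have hXcnn : (0:ℝ) ≤ ((gvol G Xᶜ : ℕ) : ℝ) := Nat.cast_nonneg _
    have hYcnn : (0:ℝ) ≤ ((gvol G Yᶜ : ℕ) : ℝ) := Nat.cast_nonneg _
    have key : Real.sqrt (((gvol G X : ℕ) : ℝ) * ((gvol G Xᶜ : ℕ) : ℝ) / V) *
        Real.sqrt (((gvol G Y : ℕ) : ℝ) * ((gvol G Yᶜ : ℕ) : ℝ) / V) =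
        Real.sqrt (((gvol G X : ℕ) : ℝ) * ((gvol G Y : ℕ) : ℝ) *
          ((gvol G Xᶜ : ℕ) : ℝ) * ((gvol G Yᶜ : ℕ) : ℝ)) / V := by
      rw [← Real.sqrt_mul (by positivity), div_mul_div_comm,
        show ((gvol G X : ℕ) : ℝ) * ((gvol G Xᶜ : ℕ) : ℝ) *
          (((gvol G Y : ℕ) : ℝ) * ((gvol G Yᶜ : ℕ) : ℝ)) =
          ((gvol G X : ℕ) : ℝ) * ((gvol G Y : ℕ) : ℝ) *
          ((gvol G Xᶜ : ℕ) : ℝ) * ((gvol G Yᶜ : ℕ) : ℝ) from by ring,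
        Real.sqrt_div (by positivity), Real.sqrt_mul_self hVpos.le]
    rw [key, mul_div_assoc]
end

section
/- For every x ∈ {0,1}^ℓ let M(x) ∈ ℝ^{n×n} be a symmetric doubly-stochastic matrix with M(x)² = M(x) (an averaging projection), and let M = E_x[M(x)] over uniform x. Suppose there is a constant c ∈ (0,1] and a symmetric doubly-stochastic matrix P with nonnegative eigenvalues whose second-largest eigenvalue is at most 1 − ρ, such that M ≥ c·P entrywise (i.e., M_{uv} ≥ c·P_{uv} for all u,v). Then for every row vector v ∈ ℝⁿ orthogonal to the uniform distribution π, E_x[‖v·M(x)‖₂²] ≤ (1 − cρ)·‖v‖₂². -/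
open Matrix Finset

/-- Squared Euclidean norm of a finitely indexed real vector. -/
def eucNormSq {α : Type*} [Fintype α] (v : α → ℝ) : ℝ :=
  ∑ i, (v i) ^ 2

/-- Quadratic form of a nonnegative matrix with constant row and column sums `s`
is at most `s` times the squared norm. -/
lemma quad_le_of_rowsum {n : ℕ} (A : Matrix (Fin n) (Fin n) ℝ) (s : ℝ)
    (hnn : ∀ i j, 0 ≤ A i j) (hrow : ∀ i, ∑ j, A i j = s)
    (hcol : ∀ j, ∑ i, A i j = s) (v : Fin n → ℝ) :
    v ⬝ᵥ (A *ᵥ v) ≤ s * ∑ i, v i ^ 2 := by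
  have hQ : v ⬝ᵥ (A *ᵥ v) = ∑ i, ∑ j, v i * (A i j * v j) := by
    simp [dotProduct, mulVec, Finset.mul_sum]
  have h1 : ∑ i, ∑ j, A i j * v i ^ 2 = s * ∑ i, v i ^ 2 := by
    rw [Finset.mul_sum]
    refine Finset.sum_congr rfl fun i _ => ?_
    rw [← Finset.sum_mul, hrow, mul_comm]
  have h2 : ∑ i : Fin n, ∑ j, A i j * v j ^ 2 = s * ∑ i, v i ^ 2 := by
    rw [Finset.sum_comm, Finset.mul_sum]
    refine Finset.sum_congr rfl fun j _ => ?_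
    rw [← Finset.sum_mul, hcol, mul_comm]
  have hmain : 2 * (v ⬝ᵥ (A *ᵥ v))
      ≤ (∑ i, ∑ j, A i j * v i ^ 2) + (∑ i, ∑ j, A i j * v j ^ 2) := by
    rw [hQ, ← Finset.sum_add_distrib, Finset.mul_sum]
    refine Finset.sum_le_sum fun i _ => ?_
    rw [← Finset.sum_add_distrib, Finset.mul_sum]
    refine Finset.sum_le_sum fun j _ => ?_
    nlinarith [mul_nonneg (hnn i j) (sq_nonneg (v i - v j))]
  rw [h1, h2] at hmain
  linarith

/-- Eigenvector alternative for a doubly stochastic symmetric matrix with gap: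
every eigenvalue is at most `1 - ρ`, except along the all-ones direction, which is
orthogonal to any sum-zero vector. -/
lemma eig_alt {n : ℕ} (P : Matrix (Fin n) (Fin n) ℝ) (ρ : ℝ) (hρ : 0 < ρ)
    (hProw : ∀ i, ∑ j, P i j = 1) (hPcol : ∀ j, ∑ i, P i j = 1)
    (hPeigGap : ∀ (b : ℝ) (u : Fin n → ℝ), u ≠ 0 → (∑ i, u i) = 0 →
      P *ᵥ u = b • u → b ≤ 1 - ρ)
    (u : Fin n → ℝ) (hu : u ≠ 0) (μ : ℝ) (heig : P *ᵥ u = μ • u)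
    (v : Fin n → ℝ) (hv : ∑ i, v i = 0) :
    μ ≤ 1 - ρ ∨ v ⬝ᵥ u = 0 := by
  set s := ∑ j, u j with hs
  by_cases hs0 : s = 0
  · exact Or.inl (hPeigGap μ u hu hs0 heig)
  · right
    have hn : 0 < n := by
      rcases Nat.eq_zero_or_pos n with h | h
      · exfalso; apply hu; funext i; exact absurd i.2 (by omega)
      · exact h
    have hnR : (n : ℝ) ≠ 0 := Nat.cast_ne_zero.mpr hn.ne'
    set w : Fin n → ℝ := fun i => u i - s / n with hw
    have hsumw : ∑ i, w i = 0 := by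
      simp only [hw, Finset.sum_sub_distrib, ← hs, Finset.sum_const,
        Finset.card_univ, Fintype.card_fin, nsmul_eq_mul]
      field_simp
      ring
    have hPw : ∀ i, (P *ᵥ w) i = μ * u i - s / n := by
      intro i
      have e1 : (P *ᵥ w) i = ∑ k, P i k * (u k - s / n) := by
        simp [mulVec, dotProduct, hw]
      have e2 : ∑ k, P i k * (u k - s / n)
          = (∑ k, P i k * u k) - (∑ k, P i k) * (s / n) := by
        rw [Finset.sum_mul, ← Finset.sum_sub_distrib]
        exact Finset.sum_congr rfl fun k _ => by ring
      have e3 : ∑ k, P i k * u k = μ * u i := by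
        have := congrFun heig i
        simpa [mulVec, dotProduct] using this
      rw [e1, e2, e3, hProw i, one_mul]
    have hsumPw : ∑ i, (P *ᵥ w) i = ∑ j, w j := by
      simp only [mulVec, dotProduct]
      rw [Finset.sum_comm]
      refine Finset.sum_congr rfl fun j _ => ?_
      rw [← Finset.sum_mul, hPcol, one_mul]
    have hμ1 : μ = 1 := by
      have h1 : ∑ i, (P *ᵥ w) i = μ * s - s := by
        rw [Finset.sum_congr rfl fun i _ => hPw i]
        simp only [Finset.sum_sub_distrib, ← Finset.mul_sum, ← hs,
          Finset.sum_const, Finset.card_univ, Fintype.card_fin, nsmul_eq_mul]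
        field_simp
      rw [hsumPw, hsumw] at h1
      have hms : (μ - 1) * s = 0 := by linarith [h1.symm]
      rcases mul_eq_zero.mp hms with h | h
      · linarith
      · exact absurd h hs0
    have hweq : P *ᵥ w = w := by
      funext i
      rw [hPw i, hμ1, one_mul, hw]
    have hw0 : w = 0 := by
      by_contra hwne
      have := hPeigGap 1 w hwne hsumw (by rw [hweq, one_smul])
      linarith
    have hu_const : ∀ i, u i = s / n := by
      intro i
      have := congrFun hw0 i
      simp only [hw, Pi.zero_apply] at this
      linarith
    have : v ⬝ᵥ u = (∑ i, v i) * (s / n) := by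
      simp only [dotProduct]
      rw [Finset.sum_mul]
      exact Finset.sum_congr rfl fun i _ => by rw [hu_const i]
    rw [this, hv, zero_mul]

/-- Quadratic form bound via the spectral gap for sum-zero vectors. -/
lemma quad_le_of_gap {n : ℕ} (P : Matrix (Fin n) (Fin n) ℝ) (ρ : ℝ) (hρ : 0 < ρ)
    (hPsym : P.IsSymm) (hProw : ∀ i, ∑ j, P i j = 1) (hPcol : ∀ j, ∑ i, P i j = 1)
    (hPeigGap : ∀ (b : ℝ) (u : Fin n → ℝ), u ≠ 0 → (∑ i, u i) = 0 →
      P *ᵥ u = b • u → b ≤ 1 - ρ)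
    (v : Fin n → ℝ) (hv : ∑ i, v i = 0) :
    v ⬝ᵥ (P *ᵥ v) ≤ (1 - ρ) * ∑ i, v i ^ 2 := by
  have hP : P.IsHermitian := by
    rw [Matrix.IsHermitian]
    simpa using hPsym.eq
  set b := hP.eigenvectorBasis with hbdef
  set μ := hP.eigenvalues with hμdef
  set B : Fin n → Fin n → ℝ := fun i => WithLp.equiv 2 (Fin n → ℝ) (b i) with hB
  set cf : Fin n → ℝ := fun i => b.repr (WithLp.toLp 2 v) i with hcf
  have hmv : ∀ i, P *ᵥ B i = μ i • B i := fun i => hP.mulVec_eigenvectorBasis i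
  have hdotb : ∀ i, ∑ j, v j * B i j = cf i := by
    intro i
    have h := b.repr_apply_apply (WithLp.toLp 2 v) i
    rw [hcf]
    simp only []
    rw [h, PiLp.inner_apply]
    simp [hB, WithLp.ofLp_toLp, mul_comm]
  have hvsum : (WithLp.toLp 2 v : EuclideanSpace ℝ (Fin n)) = ∑ i, cf i • b i := (b.sum_repr (WithLp.toLp 2 v)).symm
  have hvfun : ∀ j, v j = ∑ i, cf i * B i j := by
    intro j
    have h1 := congrArg (WithLp.linearEquiv 2 ℝ (Fin n → ℝ)) hvsum
    rw [map_sum] at h1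
    simp only [_root_.map_smul, WithLp.linearEquiv_apply] at h1
    have h2 : (WithLp.addEquiv 2 (Fin n → ℝ)).toFun (WithLp.toLp 2 v : EuclideanSpace ℝ (Fin n)) = v := rfl
    rw [h2] at h1
    have := congrFun h1 j
    simpa [Finset.sum_apply, hB] using this
  have hbne : ∀ i, B i ≠ 0 := by
    intro i h
    have h1 : ‖b i‖ = 1 := b.orthonormal.1 i
    have h0 : b i = 0 := by
      apply (WithLp.equiv 2 (Fin n → ℝ)).injective
      simpa [hB] using h
    rw [h0, norm_zero] at h1
    norm_num at h1
  have hPv : P *ᵥ v = fun j => ∑ i, cf i * (μ i * B i j) := by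
    funext j
    simp only [mulVec, dotProduct]
    calc ∑ k, P j k * v k = ∑ k, P j k * ∑ i, cf i * B i k :=
          Finset.sum_congr rfl fun k _ => by rw [← hvfun k]
      _ = ∑ k, ∑ i, P j k * (cf i * B i k) :=
          Finset.sum_congr rfl fun k _ => Finset.mul_sum _ _ _
      _ = ∑ i, ∑ k, P j k * (cf i * B i k) := Finset.sum_comm
      _ = ∑ i, cf i * (μ i * B i j) := by
          refine Finset.sum_congr rfl fun i _ => ?_
          have heq := congrFun (hmv i) j
          simp only [mulVec, dotProduct, Pi.smul_apply, smul_eq_mul] at heq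
          calc ∑ k, P j k * (cf i * B i k) = cf i * ∑ k, P j k * B i k := by
                rw [Finset.mul_sum]
                exact Finset.sum_congr rfl fun k _ => by ring
            _ = cf i * (μ i * B i j) := by rw [heq]
  have hquad : v ⬝ᵥ (P *ᵥ v) = ∑ i, μ i * cf i ^ 2 := by
    rw [hPv]
    simp only [dotProduct]
    calc ∑ j, v j * ∑ i, cf i * (μ i * B i j)
        = ∑ j, ∑ i, v j * (cf i * (μ i * B i j)) :=
          Finset.sum_congr rfl fun j _ => Finset.mul_sum _ _ _
      _ = ∑ i, ∑ j, v j * (cf i * (μ i * B i j)) := Finset.sum_comm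
      _ = ∑ i, μ i * cf i ^ 2 := by
          refine Finset.sum_congr rfl fun i _ => ?_
          have hstep : ∑ j, v j * (cf i * (μ i * B i j))
              = (μ i * cf i) * ∑ j, v j * B i j := by
            rw [Finset.mul_sum]
            exact Finset.sum_congr rfl fun j _ => by ring
          rw [hstep, hdotb i]; ring
  have hnorm : ∑ i, v i ^ 2 = ∑ i, cf i ^ 2 := by
    calc ∑ j, v j ^ 2 = ∑ j, v j * v j :=
          Finset.sum_congr rfl fun j _ => sq (v j)
      _ = ∑ j, v j * ∑ i, cf i * B i j :=
          Finset.sum_congr rfl fun j _ => congrArg (fun t => v j * t) (hvfun j)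
      _ = ∑ j, ∑ i, v j * (cf i * B i j) :=
          Finset.sum_congr rfl fun j _ => Finset.mul_sum _ _ _
      _ = ∑ i, ∑ j, v j * (cf i * B i j) := Finset.sum_comm
      _ = ∑ i, cf i ^ 2 := by
          refine Finset.sum_congr rfl fun i _ => ?_
          have hstep : ∑ j, v j * (cf i * B i j) = cf i * ∑ j, v j * B i j := by
            rw [Finset.mul_sum]
            exact Finset.sum_congr rfl fun j _ => by ring
          rw [hstep, hdotb i]; ring
  rw [hquad, hnorm, Finset.mul_sum]
  refine Finset.sum_le_sum fun i _ => ?_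
  rcases eig_alt P ρ hρ hProw hPcol hPeigGap (B i) (hbne i) (μ i) (hmv i) v hv with h | h
  · exact mul_le_mul_of_nonneg_right h (sq_nonneg _)
  · have hc0 : cf i = 0 := by
      rw [← hdotb i]
      simpa [dotProduct] using h
    rw [hc0]
    simp

/-- Linearity of the quadratic form in the matrix. -/
lemma quad_smul_sum {σ : Type*} [Fintype σ] {n : ℕ} (t : ℝ)
    (f : σ → Matrix (Fin n) (Fin n) ℝ) (v : Fin n → ℝ) :
    v ⬝ᵥ ((t • ∑ x, f x) *ᵥ v) = t * ∑ x, v ⬝ᵥ (f x *ᵥ v) := by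
  simp only [dotProduct, mulVec, Matrix.smul_apply, Matrix.sum_apply, smul_eq_mul]
  calc ∑ i, v i * ∑ j, t * (∑ x, f x i j) * v j
      = ∑ i, ∑ j, ∑ x, t * (v i * (f x i j * v j)) := by
        refine Finset.sum_congr rfl fun i _ => ?_
        rw [Finset.mul_sum]
        refine Finset.sum_congr rfl fun j _ => ?_
        rw [show v i * (t * (∑ x, f x i j) * v j)
            = t * v i * v j * ∑ x, f x i j from by ring, Finset.mul_sum]
        exact Finset.sum_congr rfl fun x _ => by ring
    _ = ∑ i, ∑ x, ∑ j, t * (v i * (f x i j * v j)) :=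
        Finset.sum_congr rfl fun i _ => Finset.sum_comm
    _ = ∑ x, ∑ i, ∑ j, t * (v i * (f x i j * v j)) := Finset.sum_comm
    _ = t * ∑ x, ∑ i, v i * ∑ j, f x i j * v j := by
        rw [Finset.mul_sum]
        refine Finset.sum_congr rfl fun x _ => ?_
        rw [Finset.mul_sum]
        refine Finset.sum_congr rfl fun i _ => ?_
        rw [Finset.mul_sum, Finset.mul_sum]

/-- Contraction of an averaged family of symmetric doubly-stochastic projections:
if each `M(x)` is a symmetric doubly-stochastic idempotent, the average
`M = E_x[M(x)]` dominates `c·P` entrywise for a symmetric doubly-stochastic `P`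
with nonnegative eigenvalues and second-largest eigenvalue at most `1 − ρ`, then
`E_x[‖v·M(x)‖₂²] ≤ (1 − cρ)·‖v‖₂²` for every row vector `v` orthogonal to the
uniform distribution. -/
theorem averaged_projection_contraction {ℓ n : ℕ}
    (Mx : (Fin ℓ → Bool) → Matrix (Fin n) (Fin n) ℝ)
    (hsym : ∀ x, (Mx x).IsSymm)
    (hnn : ∀ x i j, 0 ≤ Mx x i j)
    (hrow : ∀ x i, ∑ j, Mx x i j = 1) (hcol : ∀ x j, ∑ i, Mx x i j = 1)
    (hproj : ∀ x, Mx x * Mx x = Mx x)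
    (c ρ : ℝ) (hc0 : 0 < c) (hc1 : c ≤ 1) (hρ : 0 < ρ)
    (P : Matrix (Fin n) (Fin n) ℝ)
    (hPsym : P.IsSymm) (hPnn : ∀ i j, 0 ≤ P i j)
    (hProw : ∀ i, ∑ j, P i j = 1) (hPcol : ∀ j, ∑ i, P i j = 1)
    (hPeigNonneg : ∀ (b : ℝ) (v : Fin n → ℝ), v ≠ 0 → P *ᵥ v = b • v → 0 ≤ b)
    (hPeigGap : ∀ (b : ℝ) (v : Fin n → ℝ), v ≠ 0 → (∑ i, v i) = 0 →
      P *ᵥ v = b • v → b ≤ 1 - ρ)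
    (hdom : ∀ i j, c * P i j ≤ ((2 : ℝ) ^ ℓ)⁻¹ * ∑ x, Mx x i j) :
    ∀ v : Fin n → ℝ, (∑ i, v i) = 0 →
      ((2 : ℝ) ^ ℓ)⁻¹ * ∑ x, eucNormSq (v ᵥ* Mx x)
        ≤ (1 - c * ρ) * eucNormSq v := by
  intro v hv
  set t : ℝ := ((2 : ℝ) ^ ℓ)⁻¹ with ht
  have ht0 : (0:ℝ) < 2 ^ ℓ := by positivity
  have hcard : (Fintype.card (Fin ℓ → Bool) : ℝ) = 2 ^ ℓ := by
    simp [Fintype.card_fun]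
  have hterm : ∀ x, eucNormSq (v ᵥ* Mx x) = v ⬝ᵥ (Mx x *ᵥ v) := by
    intro x
    have hvm : v ᵥ* Mx x = Mx x *ᵥ v := by
      rw [← (hsym x).eq, Matrix.mulVec_transpose, (hsym x).eq]
    have h1 : eucNormSq (v ᵥ* Mx x) = (v ᵥ* Mx x) ⬝ᵥ (v ᵥ* Mx x) := by
      simp [eucNormSq, dotProduct, sq]
    rw [h1]
    nth_rewrite 2 [hvm]
    rw [← Matrix.dotProduct_mulVec, Matrix.mulVec_mulVec, hproj x]
  set N : Matrix (Fin n) (Fin n) ℝ := t • ∑ x, Mx x with hN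
  have hNentry : ∀ i j, N i j = t * ∑ x, Mx x i j := by
    intro i j
    simp [hN, Matrix.sum_apply]
  have hLHS : t * ∑ x, eucNormSq (v ᵥ* Mx x) = v ⬝ᵥ (N *ᵥ v) := by
    rw [hN, quad_smul_sum]
    congr 1
    exact Finset.sum_congr rfl fun x _ => hterm x
  rw [hLHS]
  set A : Matrix (Fin n) (Fin n) ℝ := N - c • P with hA
  have hAentry : ∀ i j, A i j = N i j - c * P i j := by
    intro i j; simp [hA, Matrix.sub_apply, Matrix.smul_apply]
  have hAnn : ∀ i j, 0 ≤ A i j := by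
    intro i j
    rw [hAentry, hNentry]
    have := hdom i j
    linarith
  have hNrow : ∀ i, ∑ j, N i j = 1 := by
    intro i
    simp only [hNentry]
    rw [← Finset.mul_sum, Finset.sum_comm]
    have hsum : ∑ x : Fin ℓ → Bool, ∑ j, Mx x i j = (2:ℝ) ^ ℓ := by
      rw [Finset.sum_congr rfl fun x _ => hrow x i]
      simp [hcard]
    rw [hsum, ht]
    field_simp
  have hNcol : ∀ j, ∑ i, N i j = 1 := by
    intro j
    simp only [hNentry]
    rw [← Finset.mul_sum, Finset.sum_comm]
    have hsum : ∑ x : Fin ℓ → Bool, ∑ i, Mx x i j = (2:ℝ) ^ ℓ := by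
      rw [Finset.sum_congr rfl fun x _ => hcol x j]
      simp [hcard]
    rw [hsum, ht]
    field_simp
  have hArow : ∀ i, ∑ j, A i j = 1 - c := by
    intro i
    simp only [hAentry]
    rw [Finset.sum_sub_distrib, hNrow, ← Finset.mul_sum, hProw]
    ring
  have hAcol : ∀ j, ∑ i, A i j = 1 - c := by
    intro j
    simp only [hAentry]
    rw [Finset.sum_sub_distrib, hNcol, ← Finset.mul_sum, hPcol]
    ring
  have hsplit : v ⬝ᵥ (N *ᵥ v) = v ⬝ᵥ (A *ᵥ v) + c * (v ⬝ᵥ (P *ᵥ v)) := by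
    have hNAP : N = A + c • P := by rw [hA, sub_add_cancel]
    rw [hNAP, Matrix.add_mulVec, dotProduct_add, Matrix.smul_mulVec,
      dotProduct_smul, smul_eq_mul]
  rw [hsplit]
  have hAbound := quad_le_of_rowsum A (1 - c) hAnn hArow hAcol v
  have hPbound := quad_le_of_gap P ρ hρ hPsym hProw hPcol hPeigGap v hv
  have hS : eucNormSq v = ∑ i, v i ^ 2 := rfl
  rw [hS]
  have hcP : c * (v ⬝ᵥ (P *ᵥ v)) ≤ c * ((1 - ρ) * ∑ i, v i ^ 2) :=
    mul_le_mul_of_nonneg_left hPbound (le_of_lt hc0)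
  nlinarith [hAbound, hcP]
end
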